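/- arXiv:2107.02571 — 6 statements merged into one kernel-verified Lean document; each statement's English description precedes it below -/
import Mathlib

section
/- Let λ ∈ ℝ with λ ≠ 0, α ∈ ℝ, x ∈ ℝ, and let t ∈ ℝ satisfy |t| < 1 and |λ·x·t| < 1 − |t|. Then the series Σ_{n=0}^∞ L^{(α)}_{n,λ}(x)·t^n converges with sum (1 − t)^{−(α+1)} · (1 − λ·x·t/(1 − t))^{1/λ}. (Equivalently: the coefficient of t^n in the generating function (1−t)^{−(α+1)} e_λ(−xt/(1−t)) is Σ_{m=0}^{n} binom(n+α, n−m)·(−1)^m·(1)_{m,λ}·x^m/m!.) -/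
/-- The degenerate falling factorial `(1)_{m,λ} = ∏_{j=0}^{m-1} (1 - jλ)`. -/
noncomputable def degFall (lam : ℝ) (m : ℕ) : ℝ :=
  ∏ j ∈ Finset.range m, (1 - (j : ℝ) * lam)

/-- Generalized binomial coefficient `binom(n+α, n−m) = (∏_{j=0}^{n−m−1} (n+α−j))/(n−m)!`. -/
noncomputable def genBinom (α : ℝ) (n m : ℕ) : ℝ :=
  (∏ j ∈ Finset.range (n - m), ((n : ℝ) + α - (j : ℝ))) / (Nat.factorial (n - m) : ℝ)

/-- The degenerate generalized Laguerre polynomial `L^{(α)}_{n,λ}(x)`. -/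
noncomputable def degLaguerre (lam α : ℝ) (n : ℕ) (x : ℝ) : ℝ :=
  ∑ m ∈ Finset.range (n + 1),
    genBinom α n m * (-1 : ℝ) ^ m * degFall lam m * x ^ m / (Nat.factorial m : ℝ)

open Finset Filter


noncomputable def binCoef (b : ℝ) (k : ℕ) : ℝ :=
  (∏ j ∈ Finset.range k, (b + j)) / (Nat.factorial k : ℝ)

lemma binCoef_zero (b : ℝ) : binCoef b 0 = 1 := by simp [binCoef]

lemma binCoef_succ (b : ℝ) (k : ℕ) :
    binCoef b (k + 1) = binCoef b k * ((b + k) / (k + 1)) := by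
  have h1 : (Nat.factorial (k+1) : ℝ) = (k+1) * Nat.factorial k := by
    push_cast [Nat.factorial_succ]; ring
  have h2 : (Nat.factorial k : ℝ) ≠ 0 := Nat.cast_ne_zero.2 (Nat.factorial_ne_zero k)
  have h3 : ((k : ℝ) + 1) ≠ 0 := by positivity
  rw [binCoef, binCoef, prod_range_succ, h1, div_mul_div_comm,
    mul_comm ((k:ℝ)+1) (Nat.factorial k : ℝ)]

lemma abs_binCoef_le (b : ℝ) (k : ℕ) : |binCoef b k| ≤ binCoef |b| k := by
  rw [binCoef, binCoef, abs_div, Nat.abs_cast]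
  gcongr
  rw [abs_prod]
  apply Finset.prod_le_prod (fun i _ => abs_nonneg _)
  intro i _
  calc |b + (i:ℝ)| ≤ |b| + |(i:ℝ)| := abs_add_le _ _
    _ = |b| + i := by rw [Nat.abs_cast]

lemma binCoef_nonneg {b : ℝ} (hb : 0 ≤ b) (k : ℕ) : 0 ≤ binCoef b k := by
  apply div_nonneg _ (by positivity)
  apply Finset.prod_nonneg
  intro i _
  positivity

lemma summable_binCoef_mul_pow (b : ℝ) {r : ℝ} (hr : |r| < 1) :
    Summable (fun k => binCoef b k * r ^ k) := by
  set r' : ℝ := (1 + |r|) / 2 with hr'def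
  have hrr' : |r| < r' := by rw [hr'def]; linarith
  have hr'1 : r' < 1 := by rw [hr'def]; linarith
  have hr'0 : 0 < r' := lt_of_le_of_lt (abs_nonneg r) hrr'
  apply summable_of_ratio_norm_eventually_le hr'1
  rw [eventually_atTop]
  refine ⟨⌈|b| / (r' - |r|)⌉₊, fun k hk => ?_⟩
  have hkey : (|b| + k) * |r| ≤ r' * (k + 1) := by
    have hc : (0:ℝ) < r' - |r| := by linarith
    have hceil := Nat.le_ceil (|b| / (r' - |r|))
    have hk' : ((⌈|b| / (r' - |r|)⌉₊ : ℕ) : ℝ) ≤ (k : ℝ) := Nat.cast_le.2 hk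
    have h1 : |b| ≤ (r' - |r|) * k := by
      calc |b| = |b| / (r' - |r|) * (r' - |r|) := (div_mul_cancel₀ _ (ne_of_gt hc)).symm
        _ ≤ (k : ℝ) * (r' - |r|) := by
            apply mul_le_mul_of_nonneg_right _ hc.le
            linarith
        _ = (r' - |r|) * k := mul_comm _ _
    have h2 : |b| * |r| ≤ (r' - |r|) * k := by
      calc |b| * |r| ≤ |b| * 1 := mul_le_mul_of_nonneg_left hr.le (abs_nonneg b)
        _ = |b| := mul_one _
        _ ≤ (r' - |r|) * k := h1
    nlinarith [abs_nonneg r, abs_nonneg b]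
  have hfact : ‖binCoef b (k+1) * r ^ (k+1)‖
      = |binCoef b k| * (|b + k| / (k+1)) * (|r| ^ k * |r|) := by
    rw [binCoef_succ]
    rw [Real.norm_eq_abs, abs_mul, abs_mul, abs_div, pow_succ, abs_mul, abs_pow]
    congr 2
    rw [abs_of_pos (by positivity : (0:ℝ) < (k:ℝ)+1)]
  rw [hfact, Real.norm_eq_abs, abs_mul, abs_pow]
  have hk1 : (0:ℝ) < (k:ℝ) + 1 := by positivity
  have habsbk : |b + (k:ℝ)| ≤ |b| + k := by
    calc |b + (k:ℝ)| ≤ |b| + |(k:ℝ)| := abs_add_le _ _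
      _ = |b| + k := by rw [Nat.abs_cast]
  have hnum : |b + (k:ℝ)| * |r| ≤ r' * (k+1) :=
    le_trans (mul_le_mul_of_nonneg_right habsbk (abs_nonneg r)) hkey
  calc |binCoef b k| * (|b + k| / (k+1)) * (|r| ^ k * |r|)
      = |binCoef b k| * |r| ^ k * ((|b + k| * |r|) / (k+1)) := by ring
    _ ≤ |binCoef b k| * |r| ^ k * ((r' * (k+1)) / (k+1)) := by
        apply mul_le_mul_of_nonneg_left _ (by positivity)
        exact div_le_div_of_nonneg_right hnum hk1.le
    _ = r' * (|binCoef b k| * |r| ^ k) := by field_simp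

lemma binCoef_succ_left (b : ℝ) (k : ℕ) :
    binCoef b (k + 1) * (k + 1) = b * binCoef (b + 1) k := by
  have h1 : (Nat.factorial (k+1) : ℝ) = (k+1) * Nat.factorial k := by
    push_cast [Nat.factorial_succ]; ring
  have h2 : (Nat.factorial k : ℝ) ≠ 0 := Nat.cast_ne_zero.2 (Nat.factorial_ne_zero k)
  have h3 : ((k : ℝ) + 1) ≠ 0 := by positivity
  have hp : ∏ j ∈ Finset.range (k+1), (b + j) = b * ∏ j ∈ Finset.range k, (b + 1 + j) := by
    rw [Finset.prod_range_succ']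
    simp only [Nat.cast_zero, add_zero, Nat.cast_add, Nat.cast_one]
    rw [mul_comm]
    congr 1
    apply Finset.prod_congr rfl
    intro i _
    ring
  rw [binCoef, binCoef, hp, h1]
  field_simp

lemma summable_k_binCoef (b : ℝ) {r : ℝ} (hr : |r| < 1) :
    Summable (fun k : ℕ => binCoef |b| k * ((k : ℝ) * r ^ (k - 1))) := by
  rw [← summable_nat_add_iff 1]
  have : (fun k : ℕ => binCoef |b| (k + 1) * (((k : ℝ) + 1) * r ^ (k + 1 - 1)))
      = fun k : ℕ => |b| * (binCoef (|b| + 1) k * r ^ k) := by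
    funext k
    have h := binCoef_succ_left |b| k
    simp only [Nat.add_sub_cancel]
    calc binCoef |b| (k + 1) * (((k : ℝ) + 1) * r ^ k)
        = (binCoef |b| (k + 1) * ((k : ℝ) + 1)) * r ^ k := by ring
      _ = (|b| * binCoef (|b| + 1) k) * r ^ k := by rw [h]
      _ = |b| * (binCoef (|b| + 1) k * r ^ k) := by ring
  have h2 : ∀ k : ℕ, ((k:ℝ) + 1) = ((k + 1 : ℕ) : ℝ) := by intro k; push_cast; ring
  simp only [Nat.cast_add, Nat.cast_one]
  rw [this]
  exact (summable_binCoef_mul_pow (|b| + 1) hr).mul_left |b|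

lemma binCoef_mul (b : ℝ) (k : ℕ) :
    binCoef b (k + 1) * ((k : ℝ) + 1) = binCoef b k * (b + k) := by
  rw [binCoef_succ]
  have h3 : ((k : ℝ) + 1) ≠ 0 := by positivity
  field_simp

theorem hasSum_binCoef_rpow (b : ℝ) {t : ℝ} (ht : |t| < 1) :
    HasSum (fun k : ℕ => binCoef b k * t ^ k) ((1 - t) ^ (-b)) := by
  set ρ : ℝ := (1 + |t|) / 2 with hρdef
  have htρ : |t| < ρ := by rw [hρdef]; linarith
  have hρ1 : ρ < 1 := by rw [hρdef]; linarith
  have hρ0 : 0 < ρ := lt_of_le_of_lt (abs_nonneg t) htρ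
  have hρabs : |ρ| < 1 := by rwa [abs_of_pos hρ0]
  set s : Set ℝ := Metric.ball (0:ℝ) ρ with hsdef
  have hmem : ∀ {y : ℝ}, y ∈ s → |y| < ρ := by
    intro y hy
    simpa [hsdef, Real.dist_eq] using hy
  have h0s : (0:ℝ) ∈ s := by simp [hsdef, hρ0]
  have hts : t ∈ s := by
    simp only [hsdef, Metric.mem_ball, Real.dist_eq, sub_zero]
    exact htρ
  set g' : ℕ → ℝ → ℝ := fun k y => binCoef b k * ((k:ℝ) * y ^ (k - 1)) with hg'def
  set u : ℕ → ℝ := fun k => binCoef |b| k * ((k:ℝ) * ρ ^ (k - 1)) with hudef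
  have hu : Summable u := summable_k_binCoef b hρabs
  have hgderiv : ∀ (k:ℕ) (y:ℝ), HasDerivAt (fun z => binCoef b k * z ^ k) (g' k y) y := by
    intro k y
    simpa [hg'def, mul_comm] using (hasDerivAt_pow k y).const_mul (binCoef b k)
  have hg'bound : ∀ (k:ℕ) (y:ℝ), y ∈ s → ‖g' k y‖ ≤ u k := by
    intro k y hy
    have h1 : |y| ≤ ρ := (hmem hy).le
    have h2 : |binCoef b k| ≤ binCoef |b| k := abs_binCoef_le b k
    calc ‖g' k y‖ = |binCoef b k| * ((k:ℝ) * |y| ^ (k-1)) := by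
          rw [hg'def]
          simp only [Real.norm_eq_abs, abs_mul, abs_pow, Nat.abs_cast]
      _ ≤ binCoef |b| k * ((k:ℝ) * ρ ^ (k-1)) := by
          gcongr
          exact le_trans (abs_nonneg _) h2
      _ = u k := rfl
  have hsum0 : Summable fun k : ℕ => binCoef b k * (0:ℝ) ^ k :=
    summable_binCoef_mul_pow b (by simp)
  set f : ℝ → ℝ := fun y => ∑' k : ℕ, binCoef b k * y ^ k with hfdef
  have hder : ∀ y ∈ s, HasDerivAt f (∑' k, g' k y) y := by
    intro y hy
    exact hasDerivAt_tsum_of_isPreconnected hu Metric.isOpen_ball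
      ((convex_ball _ _).isPreconnected) (fun k z _ => hgderiv k z)
      hg'bound h0s hsum0 hy
  have hfs : ∀ y ∈ s, HasSum (fun k : ℕ => binCoef b k * y ^ k) (f y) := fun y hy =>
    (summable_binCoef_mul_pow b ((hmem hy).trans hρ1)).hasSum
  have hg's : ∀ y ∈ s, Summable fun k => g' k y := fun y hy =>
    Summable.of_norm_bounded hu (fun k => hg'bound k y hy)
  have hode : ∀ y ∈ s, (1 - y) * (∑' k, g' k y) = b * f y := by
    intro y hy
    set S := ∑' k, g' k y with hSdef
    have h1 : HasSum (fun k => g' k y) S := (hg's y hy).hasSum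
    have h2 : HasSum (fun k => g' (k + 1) y) (S - ∑ i ∈ Finset.range 1, g' i y) :=
      (hasSum_nat_add_iff' 1).mpr h1
    have hz : ∑ i ∈ Finset.range 1, g' i y = 0 := by
      simp [hg'def]
    rw [hz, sub_zero] at h2
    have hfe : (fun k => g' (k+1) y) = fun k => binCoef b k * (b + k) * y ^ k := by
      funext k
      simp only [hg'def, Nat.add_sub_cancel, Nat.cast_add, Nat.cast_one]
      calc binCoef b (k+1) * (((k:ℝ)+1) * y^k)
          = (binCoef b (k+1) * ((k:ℝ)+1)) * y^k := by ring
        _ = binCoef b k * (b+k) * y^k := by rw [binCoef_mul]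
    rw [hfe] at h2
    have h4 : HasSum (fun k => binCoef b k * (k:ℝ) * y ^ k) (y * S) := by
      have h4' := h1.mul_left y
      have hfe2 : (fun k => y * g' k y) = fun k => binCoef b k * (k:ℝ) * y ^ k := by
        funext k
        cases k with
        | zero => simp [hg'def]
        | succ n =>
          simp only [hg'def, Nat.add_sub_cancel, Nat.cast_add, Nat.cast_one]
          rw [pow_succ]
          ring
      rwa [hfe2] at h4'
    have h5 := h2.sub h4
    have hfe3 : (fun k => binCoef b k * (b + k) * y ^ k - binCoef b k * (k:ℝ) * y ^ k)
        = fun k => b * (binCoef b k * y ^ k) := by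
      funext k; ring
    rw [hfe3] at h5
    have h6 : HasSum (fun k => b * (binCoef b k * y ^ k)) (b * f y) := (hfs y hy).mul_left b
    have h7 : S - y * S = b * f y := h5.unique h6
    linarith [h7]
  set G : ℝ → ℝ := fun y => f y * (1 - y) ^ b with hGdef
  have hGderiv : ∀ y ∈ s, HasDerivAt G 0 y := by
    intro y hy
    have hy1 : 0 < 1 - y := by
      have h1 := hmem hy
      have h2 : y ≤ |y| := le_abs_self y
      linarith
    have hD := hder y hy
    have hrpow : HasDerivAt (fun z : ℝ => (1 - z) ^ b) (-(b * (1 - y) ^ (b - 1))) y := by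
      have h1 : HasDerivAt (fun z : ℝ => 1 - z) (-1) y := by
        simpa using (hasDerivAt_id y).const_sub 1
      have h2 : HasDerivAt (fun x : ℝ => x ^ b) (b * (1 - y) ^ (b - 1)) (1 - y) :=
        Real.hasDerivAt_rpow_const (Or.inl (ne_of_gt hy1))
      have h3 := h2.comp y h1
      rw [mul_neg_one] at h3
      exact h3
    have hprod := hD.mul hrpow
    have hprod' : HasDerivAt G ((∑' k, g' k y) * (1 - y) ^ b + f y * -(b * (1 - y) ^ (b - 1))) y :=
      hprod
    have hsplit : (1 - y) ^ b = (1 - y) ^ (b - 1) * (1 - y) := by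
      rw [← Real.rpow_add_one (ne_of_gt hy1) (b-1)]
      norm_num
    have hode' := hode y hy
    convert hprod' using 1
    rw [hsplit]
    linear_combination (-(1 - y) ^ (b - 1)) * hode'
  have hGdiff : DifferentiableOn ℝ G s := fun y hy =>
    ((hGderiv y hy).differentiableAt).differentiableWithinAt
  have hGconst : G t = G 0 := by
    apply (convex_ball (0:ℝ) ρ).is_const_of_fderivWithin_eq_zero hGdiff _ hts h0s
    intro y hy
    rw [fderivWithin_of_isOpen Metric.isOpen_ball hy]
    have h := (hGderiv y hy).hasFDerivAt.fderiv
    rw [h]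
    ext
    simp
  have hf0 : f 0 = 1 := by
    rw [hfdef]
    simp only
    rw [tsum_eq_single 0]
    · simp [binCoef_zero]
    · intro k hk
      simp [zero_pow hk]
  have hG0 : G 0 = 1 := by
    rw [hGdef]
    simp [hf0, Real.one_rpow]
  have hGt : f t * (1 - t) ^ b = 1 := by
    have h := hGconst.trans hG0
    simpa [hGdef] using h
  have ht1 : 0 < 1 - t := by
    have := (abs_lt.mp ht).2
    linarith
  have hpos : 0 < (1 - t) ^ b := Real.rpow_pos_of_pos ht1 b
  have hft : f t = (1 - t) ^ (-b) := by
    rw [Real.rpow_neg ht1.le]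
    field_simp
    linarith [hGt]
  have hres := hfs t hts
  rwa [hft] at hres



lemma prod_shift (c : ℝ) (k : ℕ) :
    ∏ j ∈ Finset.range k, (c + k - j) = ∏ j ∈ Finset.range k, (c + 1 + j) := by
  induction k generalizing c with
  | zero => simp
  | succ n ih =>
    rw [Finset.prod_range_succ, Finset.prod_range_succ']
    have h1 : ∏ j ∈ Finset.range n, (c + (↑(n+1) : ℝ) - ↑j)
        = ∏ j ∈ Finset.range n, ((c + 1) + (n : ℝ) - ↑j) := by
      apply Finset.prod_congr rfl
      intro i _
      push_cast
      ring
    rw [h1, ih (c + 1)]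
    have h2 : ∏ j ∈ Finset.range n, (c + 1 + 1 + (j:ℝ))
        = ∏ j ∈ Finset.range n, (c + 1 + (↑(j+1) : ℝ)) := by
      apply Finset.prod_congr rfl
      intro i _
      push_cast
      ring
    rw [h2]
    push_cast
    ring

lemma genBinom_eq (α : ℝ) {n m : ℕ} (h : m ≤ n) :
    genBinom α n m = binCoef (α + m + 1) (n - m) := by
  rw [genBinom, binCoef]
  congr 1
  have hc : (n : ℝ) = (m : ℝ) + ((n - m : ℕ) : ℝ) := by
    rw [Nat.cast_sub h]; ring
  calc ∏ j ∈ Finset.range (n - m), ((n : ℝ) + α - (j : ℝ))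
      = ∏ j ∈ Finset.range (n - m), ((α + m) + ((n - m : ℕ) : ℝ) - j) := by
        apply Finset.prod_congr rfl
        intro i _
        rw [hc]
        ring
    _ = ∏ j ∈ Finset.range (n - m), ((α + m) + 1 + j) := prod_shift _ _
    _ = ∏ j ∈ Finset.range (n - m), ((α + m + 1) + j) := by
        apply Finset.prod_congr rfl
        intro i _
        ring

lemma degFall_eq {lam : ℝ} (hlam : lam ≠ 0) (m : ℕ) :
    degFall lam m / (Nat.factorial m : ℝ) = (-lam) ^ m * binCoef (-(1/lam)) m := by
  rw [degFall, binCoef]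
  rw [mul_div_assoc']
  congr 1
  calc ∏ j ∈ Finset.range m, (1 - (j : ℝ) * lam)
      = ∏ j ∈ Finset.range m, ((-lam) * (-(1/lam) + j)) := by
        apply Finset.prod_congr rfl
        intro i _
        field_simp
        ring
    _ = (-lam) ^ m * ∏ j ∈ Finset.range m, (-(1/lam) + j) := by
        rw [Finset.prod_mul_distrib, Finset.prod_const, Finset.card_range]

lemma binCoef_mono {b₁ b₂ : ℝ} (h0 : 0 ≤ b₁) (h : b₁ ≤ b₂) (k : ℕ) :
    binCoef b₁ k ≤ binCoef b₂ k := by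
  rw [binCoef, binCoef]
  apply div_le_div_of_nonneg_right _ (by positivity)
  apply Finset.prod_le_prod
  · intro i _; positivity
  · intro i _; linarith

lemma abs_degFall_div_le {lam : ℝ} (hlam : lam ≠ 0) (m : ℕ) :
    |degFall lam m| / (Nat.factorial m : ℝ) ≤ binCoef (1/|lam|) m * |lam| ^ m := by
  have h1 : |degFall lam m| ≤ ∏ j ∈ Finset.range m, (1 + (j:ℝ) * |lam|) := by
    rw [degFall, abs_prod]
    apply Finset.prod_le_prod (fun i _ => abs_nonneg _)
    intro i _
    calc |1 - (i:ℝ) * lam| ≤ |(1:ℝ)| + |(i:ℝ) * lam| := abs_sub _ _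
      _ = 1 + (i:ℝ) * |lam| := by rw [abs_one, abs_mul, Nat.abs_cast]
  have hlam' : (0:ℝ) < |lam| := abs_pos.2 hlam
  have h2 : ∏ j ∈ Finset.range m, (1 + (j:ℝ) * |lam|)
      = |lam| ^ m * ∏ j ∈ Finset.range m, (1/|lam| + j) := by
    calc ∏ j ∈ Finset.range m, (1 + (j:ℝ) * |lam|)
        = ∏ j ∈ Finset.range m, (|lam| * (1/|lam| + j)) := by
          apply Finset.prod_congr rfl
          intro i _
          field_simp
      _ = |lam| ^ m * ∏ j ∈ Finset.range m, (1/|lam| + j) := by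
          rw [Finset.prod_mul_distrib, Finset.prod_const, Finset.card_range]
  rw [binCoef]
  rw [div_mul_eq_mul_div, mul_comm]
  apply div_le_div_of_nonneg_right _ (by positivity)
  calc |degFall lam m| ≤ ∏ j ∈ Finset.range m, (1 + (j:ℝ) * |lam|) := h1
    _ = |lam| ^ m * ∏ j ∈ Finset.range m, (1/|lam| + j) := h2



/-- Generating function of the degenerate generalized Laguerre polynomials:
`∑ L^{(α)}_{n,λ}(x) tⁿ = (1−t)^{−(α+1)} e_λ(−xt/(1−t))` where `e_λ(u) = (1+λu)^{1/λ}`. -/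
theorem degLaguerre_generating_function (lam α x t : ℝ) (hlam : lam ≠ 0)
    (ht : |t| < 1) (hxt : |lam * x * t| < 1 - |t|) :
    HasSum (fun n : ℕ => degLaguerre lam α n x * t ^ n)
      ((1 - t) ^ (-(α + 1)) * (1 - lam * x * t / (1 - t)) ^ (1 / lam)) := by
  have ht2 := abs_lt.mp ht
  have ht1 : 0 < 1 - t := by linarith [ht2.2]
  have htabs : 0 < 1 - |t| := by linarith [ht]
  set c : ℕ → ℝ :=
    fun m => (-1:ℝ) ^ m * degFall lam m * x ^ m / (Nat.factorial m : ℝ) * t ^ m with hcdef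
  set g : ℕ × ℕ → ℝ :=
    fun p => c p.1 * (binCoef (α + p.1 + 1) p.2 * t ^ p.2) with hgdef
  set s : ℝ := lam * x * t / (1 - t) with hsdef
  have hsabs : |s| < 1 := by
    rw [hsdef, abs_div, abs_of_pos ht1, div_lt_one ht1]
    calc |lam * x * t| < 1 - |t| := hxt
      _ ≤ 1 - t := by linarith [le_abs_self t]
  set A : ℝ := (1 - t) ^ (-(α + 1)) with hAdef
  have hc_eq : ∀ m : ℕ, c m = binCoef (-(1/lam)) m * (lam * x * t) ^ m := by
    intro m
    have hd := degFall_eq hlam m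
    rw [hcdef]
    simp only
    calc (-1:ℝ)^m * degFall lam m * x^m / (Nat.factorial m : ℝ) * t^m
        = (degFall lam m / (Nat.factorial m : ℝ)) * ((-1:ℝ)^m * x^m * t^m) := by ring
      _ = ((-lam)^m * binCoef (-(1/lam)) m) * ((-1:ℝ)^m * x^m * t^m) := by rw [hd]
      _ = binCoef (-(1/lam)) m * ((-lam) * (-1) * x * t)^m := by
          rw [mul_pow, mul_pow, mul_pow]
          ring
      _ = binCoef (-(1/lam)) m * (lam * x * t)^m := by norm_num
  have hA1 : ∀ m : ℕ, HasSum (fun k => g (m, k)) (c m * (1 - t) ^ (-(α + (m:ℝ) + 1))) :=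
    fun m => (hasSum_binCoef_rpow (α + m + 1) ht).mul_left (c m)
  have hsplit : ∀ m : ℕ, (1 - t) ^ (-(α + (m:ℝ) + 1)) = A * ((1 - t) ^ m)⁻¹ := by
    intro m
    rw [show -(α + (m:ℝ) + 1) = (-(α+1)) + (-(m:ℝ)) by ring, Real.rpow_add ht1,
      Real.rpow_neg ht1.le (m:ℝ), Real.rpow_natCast, hAdef]
  have hS_eq : (fun m : ℕ => c m * (1 - t) ^ (-(α + (m:ℝ) + 1)))
      = fun m : ℕ => A * (binCoef (-(1/lam)) m * s ^ m) := by
    funext m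
    rw [hsplit m, hc_eq m, hsdef, div_pow]
    have hne : ((1 - t) ^ m : ℝ) ≠ 0 := pow_ne_zero _ (ne_of_gt ht1)
    field_simp
  have hB : HasSum (fun m : ℕ => c m * (1 - t) ^ (-(α + (m:ℝ) + 1)))
      (A * (1 - s) ^ (1/lam)) := by
    rw [hS_eq]
    have h := (hasSum_binCoef_rpow (-(1/lam)) hsabs).mul_left A
    rwa [show -(-(1/lam)) = 1/lam by ring] at h
  -- summability of the double series
  set w : ℝ := |lam * x * t| with hwdef
  have hw0 : 0 ≤ w := abs_nonneg _
  have hw1 : w / (1 - |t|) < 1 := by rw [div_lt_one htabs]; exact hxt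
  have habs_t : |(|t|)| < 1 := by rwa [abs_abs]
  set Gb : ℕ × ℕ → ℝ := fun p =>
    (binCoef (1/|lam|) p.1 * w ^ p.1) * (binCoef (|α| + p.1 + 1) p.2 * |t| ^ p.2) with hGbdef
  have hlam0 : (0:ℝ) < |lam| := abs_pos.2 hlam
  have hb1 : (0:ℝ) ≤ 1/|lam| := by positivity
  have hGb_nonneg : ∀ p, 0 ≤ Gb p := by
    intro p
    have h1 := binCoef_nonneg hb1 p.1
    have h2 := binCoef_nonneg (by positivity : (0:ℝ) ≤ |α| + p.1 + 1) p.2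
    have h3 : (0:ℝ) ≤ |t| ^ p.2 := by positivity
    have h4 : (0:ℝ) ≤ w ^ p.1 := by positivity
    rw [hGbdef]
    positivity
  have hbound : ∀ p : ℕ × ℕ, ‖g p‖ ≤ Gb p := by
    rintro ⟨m, k⟩
    rw [hgdef, hGbdef]
    simp only [Real.norm_eq_abs, abs_mul, abs_pow]
    have hc_bound : |c m| ≤ binCoef (1/|lam|) m * w ^ m := by
      rw [hcdef]
      simp only
      have e1 : |(-1:ℝ)^m * degFall lam m * x^m / (Nat.factorial m : ℝ) * t^m|
          = |degFall lam m| / (Nat.factorial m : ℝ) * (|x|^m * |t|^m) := by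
        rw [abs_mul, abs_div, abs_mul, abs_mul, abs_pow, abs_pow, abs_pow, abs_neg, abs_one,
          one_pow, Nat.abs_cast]
        ring
      rw [e1, hwdef]
      calc |degFall lam m| / (Nat.factorial m : ℝ) * (|x|^m * |t|^m)
          ≤ binCoef (1/|lam|) m * |lam|^m * (|x|^m * |t|^m) := by
            apply mul_le_mul_of_nonneg_right (abs_degFall_div_le hlam m) (by positivity)
        _ = binCoef (1/|lam|) m * (|lam| * |x| * |t|)^m := by
            rw [mul_pow, mul_pow]; ring
        _ = binCoef (1/|lam|) m * |lam * x * t|^m := by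
            rw [abs_mul, abs_mul]
    have hb_bound : |binCoef (α + m + 1) k| ≤ binCoef (|α| + m + 1) k := by
      refine le_trans (abs_binCoef_le _ k) (binCoef_mono (abs_nonneg _) ?_ k)
      have h5 : |α + ((m:ℝ) + 1)| ≤ |α| + |(m:ℝ) + 1| := abs_add_le _ _
      have h6 : |(m:ℝ) + 1| = (m:ℝ) + 1 := abs_of_pos (by positivity)
      have h7 : |α + (m:ℝ) + 1| = |α + ((m:ℝ) + 1)| := by ring_nf
      rw [h7]
      rw [h6] at h5
      linarith
    have htk : |t| ^ k ≤ |t| ^ k := le_rfl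
    calc |c m| * (|binCoef (α + ↑m + 1) k| * |t| ^ k)
        ≤ (binCoef (1/|lam|) m * w ^ m) * (binCoef (|α| + ↑m + 1) k * |t| ^ k) := by
          apply mul_le_mul hc_bound _ (by positivity) _
          · apply mul_le_mul_of_nonneg_right hb_bound (by positivity)
          · exact le_trans (abs_nonneg _) hc_bound
      _ = (binCoef (1/|lam|) m * w ^ m) * (binCoef (|α| + ↑m + 1) k * |t| ^ k) := rfl
  have hGb_fiber : ∀ m : ℕ, HasSum (fun k => Gb (m, k))
      ((binCoef (1/|lam|) m * w^m) * (1 - |t|) ^ (-(|α| + (m:ℝ) + 1))) :=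
    fun m => (hasSum_binCoef_rpow (|α| + m + 1) habs_t).mul_left _
  have hGb_outer_eq : (fun m : ℕ => (binCoef (1/|lam|) m * w^m) * (1 - |t|) ^ (-(|α| + (m:ℝ) + 1)))
      = fun m : ℕ => ((1 - |t|) ^ (-(|α|+1))) * (binCoef (1/|lam|) m * (w/(1-|t|))^m) := by
    funext m
    rw [show -(|α| + (m:ℝ) + 1) = (-(|α|+1)) + (-(m:ℝ)) by ring, Real.rpow_add htabs,
      Real.rpow_neg htabs.le (m:ℝ), Real.rpow_natCast, div_pow]
    have hne : ((1 - |t|) ^ m : ℝ) ≠ 0 := pow_ne_zero _ (ne_of_gt htabs)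
    field_simp
  have hGb_outer : Summable (fun m : ℕ =>
      (binCoef (1/|lam|) m * w^m) * (1 - |t|) ^ (-(|α| + (m:ℝ) + 1))) := by
    rw [hGb_outer_eq]
    apply Summable.mul_left
    apply summable_binCoef_mul_pow
    rw [abs_of_nonneg (by positivity)]
    exact hw1
  have hGb_sum : Summable Gb := by
    apply (summable_prod_of_nonneg hGb_nonneg).mpr
    constructor
    · intro m
      exact (hGb_fiber m).summable
    · apply Summable.congr hGb_outer
      intro m
      exact ((hGb_fiber m).tsum_eq).symm
  have hgsum : Summable g := Summable.of_norm_bounded hGb_sum hbound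
  have hgHasSum : HasSum g (∑' p, g p) := hgsum.hasSum
  have hfib : HasSum (fun m : ℕ => c m * (1 - t) ^ (-(α + (m:ℝ) + 1))) (∑' p, g p) :=
    hgHasSum.prod_fiberwise hA1
  have hEq : (∑' p, g p) = A * (1 - s) ^ (1/lam) := hfib.unique hB
  have hgT : HasSum g (A * (1 - s) ^ (1/lam)) := hEq ▸ hgHasSum
  have he : HasSum (fun y : Σ n : ℕ, Finset.HasAntidiagonal.antidiagonal n => g (y.2 : ℕ × ℕ))
      (A * (1 - s) ^ (1/lam)) :=
    Finset.HasAntidiagonal.sigmaAntidiagonalEquivProd.hasSum_iff.mpr hgT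
  have hsig : HasSum (fun n : ℕ => ∑ p ∈ Finset.HasAntidiagonal.antidiagonal n, g p)
      (A * (1 - s) ^ (1/lam)) := by
    apply he.sigma
    intro n
    have h1 := hasSum_fintype (fun q : (Finset.HasAntidiagonal.antidiagonal n : Finset (ℕ × ℕ)) => g (q : ℕ × ℕ))
    rwa [Finset.sum_coe_sort] at h1
  have hterm : ∀ n : ℕ, ∑ p ∈ Finset.HasAntidiagonal.antidiagonal n, g p = degLaguerre lam α n x * t ^ n := by
    intro n
    rw [Finset.Nat.sum_antidiagonal_eq_sum_range_succ_mk, degLaguerre, Finset.sum_mul]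
    apply Finset.sum_congr rfl
    intro m hm
    have hmn : m ≤ n := Nat.lt_succ_iff.mp (Finset.mem_range.mp hm)
    rw [hgdef]
    simp only
    rw [genBinom_eq α hmn, hcdef]
    simp only
    have hpow : t ^ m * t ^ (n - m) = t ^ n := by
      rw [← pow_add, Nat.add_sub_cancel' hmn]
    calc (-1:ℝ)^m * degFall lam m * x^m / (Nat.factorial m : ℝ) * t^m
          * (binCoef (α + m + 1) (n - m) * t^(n-m))
        = binCoef (α + m + 1) (n - m) * (-1:ℝ)^m * degFall lam m * x^m / (Nat.factorial m : ℝ)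
            * (t^m * t^(n-m)) := by ring
      _ = binCoef (α + m + 1) (n - m) * (-1:ℝ)^m * degFall lam m * x^m / (Nat.factorial m : ℝ)
            * t^n := by rw [hpow]
  have hfinal := hsig
  rw [funext hterm] at hfinal
  exact hfinal
end

section
/- (Rodrigues' type formula.) Let λ ∈ ℝ with λ ≠ 0, α ∈ ℝ, and n ∈ ℕ. For every x > 0 with |λ·x| < 1, the n-th derivative at x of the function x ↦ (1 − λ·x)^{1/λ} · x^{n+α} equals n! · (1 − λ·x)^{1/λ} · x^{α} · L^{(α)}_{n,λ}(x/(1 − λ·x)). -/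
/-- Auxiliary: the `i`-th derivative of `y ↦ (1-λy)^{1/λ}`. -/
noncomputable def Faux (lam : ℝ) (i : ℕ) (y : ℝ) : ℝ :=
  (-1 : ℝ) ^ i * degFall lam i * (1 - lam * y) ^ (1 / lam - (i : ℝ))

/-- Auxiliary: the `i`-th derivative of `y ↦ y^{n+α}`. -/
noncomputable def Gaux (α : ℝ) (n : ℕ) (i : ℕ) (y : ℝ) : ℝ :=
  (∏ j ∈ Finset.range i, ((n : ℝ) + α - (j : ℝ))) * y ^ ((n : ℝ) + α - (i : ℝ))

lemma Faux_hasDerivAt (lam : ℝ) (hlam : lam ≠ 0) (i : ℕ) {y : ℝ} (hy : 0 < 1 - lam * y) :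
    HasDerivAt (Faux lam i) (Faux lam (i + 1) y) y := by
  have h1 : HasDerivAt (fun y : ℝ => 1 - lam * y) (-lam) y := by
    simpa using ((hasDerivAt_id y).const_mul lam).const_sub 1
  have h2 := h1.rpow_const (p := 1 / lam - (i : ℝ)) (Or.inl (ne_of_gt hy))
  have h3 := h2.const_mul ((-1 : ℝ) ^ i * degFall lam i)
  convert h3 using 1
  iterate 3 rfl
  have hfall : degFall lam (i + 1) = degFall lam i * (1 - (i : ℝ) * lam) := by
    simp [degFall, Finset.prod_range_succ]
  have hcoef : -lam * (1 / lam - (i : ℝ)) = -(1 - (i : ℝ) * lam) := by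
    field_simp
  have hexp : 1 / lam - ((i : ℕ) + 1 : ℕ) = 1 / lam - (i : ℝ) - 1 := by
    push_cast; ring
  simp only [Faux, hfall, hexp]
  rw [hcoef]
  ring

lemma Gaux_hasDerivAt (α : ℝ) (n : ℕ) (i : ℕ) {y : ℝ} (hy : 0 < y) :
    HasDerivAt (Gaux α n i) (Gaux α n (i + 1) y) y := by
  have h2 := (Real.hasDerivAt_rpow_const (x := y) (p := (n : ℝ) + α - (i : ℝ))
    (Or.inl (ne_of_gt hy)))
  have h3 := h2.const_mul (∏ j ∈ Finset.range i, ((n : ℝ) + α - (j : ℝ)))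
  convert h3 using 1
  iterate 3 rfl
  have hprod : (∏ j ∈ Finset.range (i + 1), ((n : ℝ) + α - (j : ℝ)))
      = (∏ j ∈ Finset.range i, ((n : ℝ) + α - (j : ℝ))) * ((n : ℝ) + α - (i : ℝ)) := by
    simp [Finset.prod_range_succ]
  have hexp : (n : ℝ) + α - ((i : ℕ) + 1 : ℕ) = (n : ℝ) + α - (i : ℝ) - 1 := by
    push_cast; ring
  simp only [Gaux, hprod, hexp]
  ring

lemma key_leibniz (lam α : ℝ) (hlam : lam ≠ 0) (n : ℕ) (k : ℕ) :
    ∀ x : ℝ, 0 < x → 0 < 1 - lam * x →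
      iteratedDeriv k (fun y : ℝ => Faux lam 0 y * Gaux α n 0 y) x =
        ∑ i ∈ Finset.range (k + 1),
          (k.choose i : ℝ) * (Faux lam i x * Gaux α n (k - i) x) := by
  induction k with
  | zero => intro x hx h1x; simp
  | succ k ih =>
    intro x hx h1x
    have hS : IsOpen {y : ℝ | 0 < y ∧ 0 < 1 - lam * y} := by
      have : {y : ℝ | 0 < y ∧ 0 < 1 - lam * y}
          = {y : ℝ | 0 < y} ∩ {y : ℝ | 0 < 1 - lam * y} := rfl
      rw [this]
      exact (isOpen_lt continuous_const continuous_id).inter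
        (isOpen_lt continuous_const (by fun_prop))
    have hmem : x ∈ {y : ℝ | 0 < y ∧ 0 < 1 - lam * y} := ⟨hx, h1x⟩
    have heq : iteratedDeriv k (fun y : ℝ => Faux lam 0 y * Gaux α n 0 y)
        =ᶠ[nhds x] fun y => ∑ i ∈ Finset.range (k + 1),
          (k.choose i : ℝ) * (Faux lam i y * Gaux α n (k - i) y) := by
      filter_upwards [hS.mem_nhds hmem] with y hy
      exact ih y hy.1 hy.2
    rw [iteratedDeriv_succ, heq.deriv_eq]
    have hD : HasDerivAt (fun y => ∑ i ∈ Finset.range (k + 1),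
          (k.choose i : ℝ) * (Faux lam i y * Gaux α n (k - i) y))
        (∑ i ∈ Finset.range (k + 1), (k.choose i : ℝ) *
          (Faux lam (i + 1) x * Gaux α n (k - i) x +
           Faux lam i x * Gaux α n (k - i + 1) x)) x := by
      apply HasDerivAt.fun_sum
      intro i _
      exact ((Faux_hasDerivAt lam hlam i h1x).mul
        (Gaux_hasDerivAt α n (k - i) hx)).const_mul _
    rw [hD.deriv]
    rw [Finset.sum_choose_succ_mul (fun i j => Faux lam i x * Gaux α n j x) k]
    rw [← Finset.sum_add_distrib]
    apply Finset.sum_congr rfl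
    intro i hi
    have hik : i ≤ k := Nat.lt_succ_iff.mp (Finset.mem_range.mp hi)
    have : k + 1 - i = k - i + 1 := by omega
    rw [this]
    ring

/-- Rodrigues' type formula:
`dⁿ/dxⁿ [e_λ(−x) x^{n+α}] = n! e_λ(−x) x^α L^{(α)}_{n,λ}(x/(1−λx))`,
where `e_λ(−x) = (1 − λx)^{1/λ}`. -/
theorem degLaguerre_rodrigues (lam α : ℝ) (hlam : lam ≠ 0) (n : ℕ) :
    ∀ x : ℝ, 0 < x → |lam * x| < 1 →
      iteratedDeriv n (fun y : ℝ => (1 - lam * y) ^ (1 / lam) * y ^ ((n : ℝ) + α)) x =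
        (Nat.factorial n : ℝ) * (1 - lam * x) ^ (1 / lam) * x ^ α *
          degLaguerre lam α n (x / (1 - lam * x)) := by
  intro x hx hax
  have h1x : 0 < 1 - lam * x := by
    have := abs_lt.mp hax
    linarith [this.2]
  have hfun : (fun y : ℝ => (1 - lam * y) ^ (1 / lam) * y ^ ((n : ℝ) + α))
      = fun y : ℝ => Faux lam 0 y * Gaux α n 0 y := by
    funext y
    simp [Faux, Gaux, degFall]
  rw [hfun, key_leibniz lam α hlam n n x hx h1x]
  unfold degLaguerre
  simp only [Finset.mul_sum]
  apply Finset.sum_congr rfl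
  intro m hm
  have hmn : m ≤ n := Nat.lt_succ_iff.mp (Finset.mem_range.mp hm)
  -- rewrite both sides explicitly
  unfold Faux Gaux genBinom
  have hxm : (x / (1 - lam * x)) ^ m = x ^ (m : ℝ) / (1 - lam * x) ^ (m : ℝ) := by
    rw [div_pow, ← Real.rpow_natCast x m, ← Real.rpow_natCast (1 - lam * x) m]
  have h1 : (1 - lam * x) ^ (1 / lam - (m : ℝ))
      = (1 - lam * x) ^ (1 / lam) / (1 - lam * x) ^ (m : ℝ) := by
    rw [Real.rpow_sub h1x]
  have h2 : x ^ ((n : ℝ) + α - ((n - m : ℕ) : ℝ)) = x ^ α * x ^ (m : ℝ) := by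
    rw [← Real.rpow_add hx]
    congr 1
    have : ((n - m : ℕ) : ℝ) = (n : ℝ) - (m : ℝ) := by
      push_cast [hmn]; ring
    rw [this]; ring
  have hchoose : (Nat.factorial n : ℝ)
      = (n.choose m : ℝ) * (Nat.factorial m : ℝ) * (Nat.factorial (n - m) : ℝ) := by
    rw [← Nat.choose_mul_factorial_mul_factorial hmn]
    push_cast; ring
  rw [hxm, h1, h2, hchoose]
  have hfm : (Nat.factorial m : ℝ) ≠ 0 := Nat.cast_ne_zero.mpr m.factorial_ne_zero
  have hfnm : (Nat.factorial (n - m) : ℝ) ≠ 0 := Nat.cast_ne_zero.mpr (n - m).factorial_ne_zero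
  have hbx : (1 - lam * x) ^ (m : ℝ) ≠ 0 := ne_of_gt (Real.rpow_pos_of_pos h1x _)
  field_simp
end

section
/- For every λ ∈ ℝ, every n ∈ ℕ with n ≥ 1, and every x ∈ ℝ: Σ_{m=0}^{n} C(n−1, n−m)·(−1)^m·(1)_{m,λ}·x^m/m! = (1/n!)·Σ_{k=0}^{n} (−x)^k·(1)_{k,λ}·L(n,k) = Σ_{k=1}^{n} (1)_{k,λ}·(−x)^k·(1/k!)·C(n−1, k−1). In other words, the degenerate generalized Laguerre polynomial with α = −1 satisfies L^{(−1)}_{n,λ}(x) = (1/n!)·Σ_{k=0}^{n} (−x)^k·(1)_{k,λ}·L(n,k). -/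
/-- The Lah numbers: `L(n,k) = C(n−1,k−1)·n!/k!` for `1 ≤ k ≤ n`, with
`L(0,0) = 1` and `L(n,0) = 0` for `n ≥ 1`. -/
noncomputable def lah (n k : ℕ) : ℝ :=
  if k = 0 then (if n = 0 then 1 else 0)
  else (Nat.choose (n - 1) (k - 1) : ℝ) * (Nat.factorial n : ℝ) / (Nat.factorial k : ℝ)

/-- Theorem 4: for `n ≥ 1`,
`L^{(−1)}_{n,λ}(x) = (1/n!) ∑_{k=0}^n (−x)^k (1)_{k,λ} L(n,k)
 = ∑_{k=1}^n (1)_{k,λ} (−x)^k (1/k!) C(n−1,k−1)`. -/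
theorem degLaguerre_neg_one_eq_lah (lam : ℝ) (n : ℕ) (hn : 1 ≤ n) (x : ℝ) :
    (∑ m ∈ Finset.range (n + 1),
        (Nat.choose (n - 1) (n - m) : ℝ) * (-1 : ℝ) ^ m * degFall lam m * x ^ m /
          (Nat.factorial m : ℝ)) =
      (1 / (Nat.factorial n : ℝ)) *
        ∑ k ∈ Finset.range (n + 1), (-x) ^ k * degFall lam k * lah n k ∧
    (1 / (Nat.factorial n : ℝ)) *
        (∑ k ∈ Finset.range (n + 1), (-x) ^ k * degFall lam k * lah n k) =
      ∑ k ∈ Finset.Icc 1 n,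
        degFall lam k * (-x) ^ k * (1 / (Nat.factorial k : ℝ)) *
          (Nat.choose (n - 1) (k - 1) : ℝ) := by
  have hnfac : (Nat.factorial n : ℝ) ≠ 0 := Nat.cast_ne_zero.mpr (Nat.factorial_ne_zero n)
  have hsubset : Finset.Icc 1 n ⊆ Finset.range (n + 1) := by
    intro k hk
    simp only [Finset.mem_Icc] at hk
    simp [Nat.lt_succ_iff, hk.2]
  have hsum : (∑ k ∈ Finset.range (n + 1), (-x) ^ k * degFall lam k * lah n k)
      = ∑ k ∈ Finset.Icc 1 n, (-x) ^ k * degFall lam k * lah n k := by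
    refine (Finset.sum_subset hsubset ?_).symm
    intro k hk hk'
    simp only [Finset.mem_Icc, Finset.mem_range, not_and, not_le] at hk hk'
    have hk0 : k = 0 := by omega
    subst hk0
    simp [lah, Nat.one_le_iff_ne_zero.mp hn]
  constructor
  · rw [hsum, Finset.mul_sum]
    have : (∑ m ∈ Finset.range (n + 1),
        (Nat.choose (n - 1) (n - m) : ℝ) * (-1 : ℝ) ^ m * degFall lam m * x ^ m /
          (Nat.factorial m : ℝ))
        = ∑ m ∈ Finset.Icc 1 n,
        (Nat.choose (n - 1) (n - m) : ℝ) * (-1 : ℝ) ^ m * degFall lam m * x ^ m /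
          (Nat.factorial m : ℝ) := by
      refine (Finset.sum_subset hsubset ?_).symm
      intro k hk hk'
      simp only [Finset.mem_Icc, Finset.mem_range, not_and, not_le] at hk hk'
      have hk0 : k = 0 := by omega
      subst hk0
      have h : Nat.choose (n - 1) n = 0 := Nat.choose_eq_zero_of_lt (by omega)
      simp [h]
    rw [this]
    refine Finset.sum_congr rfl ?_
    intro m hm
    simp only [Finset.mem_Icc] at hm
    have hch : Nat.choose (n - 1) (n - m) = Nat.choose (n - 1) (m - 1) := by
      have : n - m = (n - 1) - (m - 1) := by omega
      rw [this, Nat.choose_symm (by omega)]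
    have hmfac : (Nat.factorial m : ℝ) ≠ 0 := Nat.cast_ne_zero.mpr (Nat.factorial_ne_zero m)
    rw [hch]
    simp only [lah, Nat.one_le_iff_ne_zero.mp hm.1, if_neg, ↓reduceIte]
    rw [neg_pow x m]
    field_simp
  · rw [hsum, Finset.mul_sum]
    refine Finset.sum_congr rfl ?_
    intro m hm
    simp only [Finset.mem_Icc] at hm
    have hmfac : (Nat.factorial m : ℝ) ≠ 0 := Nat.cast_ne_zero.mpr (Nat.factorial_ne_zero m)
    simp only [lah, Nat.one_le_iff_ne_zero.mp hm.1, if_neg, ↓reduceIte]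
    field_simp
end

section
/- Let λ ∈ ℝ with λ ≠ 0, x ∈ ℝ, and let t ∈ ℝ satisfy |t| < 1 and |λ·x·t| < 1 − |t|. Then the series Σ_{n=0}^∞ ((1/n!)·Σ_{k=0}^{n} (−x)^k·(1)_{k,λ}·L(n,k))·t^n converges with sum (1 − λ·x·t/(1 − t))^{1/λ}; that is, the coefficient of t^n in the expansion of e_λ(−xt/(1−t)) is (1/n!)·Σ_{k=0}^{n} (−x)^k·(1)_{k,λ}·L(n,k). -/
open Finset Filter

/-- Binomial series coefficient. -/
noncomputable def bc (a : ℝ) (k : ℕ) : ℝ :=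
  (∏ j ∈ Finset.range k, (a - (j : ℝ))) / (Nat.factorial k : ℝ)

lemma bc_succ (a : ℝ) (k : ℕ) : ((k : ℝ) + 1) * bc a (k + 1) = (a - k) * bc a k := by
  have hk : (Nat.factorial k : ℝ) ≠ 0 := Nat.cast_ne_zero.mpr (Nat.factorial_ne_zero k)
  simp only [bc, Finset.prod_range_succ, Nat.factorial_succ, Nat.cast_mul, Nat.cast_add,
    Nat.cast_one]
  field_simp

lemma summable_bc_deriv (a : ℝ) {r : ℝ} (hr0 : 0 < r) (hr : r < 1) :
    Summable (fun k : ℕ => (k : ℝ) * |bc a k| * r ^ (k - 1)) := by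
  set l : ℝ := (1 + r) / 2 with hl
  have hrl : r < l := by rw [hl]; linarith
  have hl1 : l < 1 := by rw [hl]; linarith
  obtain ⟨N, hN⟩ := exists_nat_ge (|a| * r / (l - r))
  apply summable_of_ratio_norm_eventually_le hl1
  filter_upwards [eventually_ge_atTop (N + 1)] with k hk
  have hk1 : (1 : ℕ) ≤ k := le_trans (Nat.le_add_left 1 N) hk
  have habs : ((k : ℝ) + 1) * |bc a (k + 1)| = |a - k| * |bc a k| := by
    have : |((k : ℝ) + 1) * bc a (k + 1)| = |(a - k) * bc a k| := by rw [bc_succ a k]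
    rw [abs_mul, abs_mul, abs_of_nonneg (by positivity : (0:ℝ) ≤ (k:ℝ) + 1)] at this
    exact this
  have hpow : r ^ (k + 1 - 1) = r * r ^ (k - 1) := by
    rcases k with _ | m
    · omega
    · simp only [Nat.add_sub_cancel]
      rw [pow_succ, mul_comm]
  have hkey : |a - k| * r ≤ l * k := by
    have h1 : |a - k| ≤ (k : ℝ) + |a| := by
      have := abs_sub_abs_le_abs_sub a (k : ℝ)
      have h2 := abs_sub (a) ((k : ℝ))
      calc |a - k| ≤ |a| + |(k:ℝ)| := abs_sub a (k:ℝ)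
        _ = (k : ℝ) + |a| := by rw [Nat.abs_cast]; ring
    have hNk : (N : ℝ) ≤ (k : ℝ) := by exact_mod_cast le_trans (Nat.le_add_right N 1) hk
    have h3 : |a| * r ≤ (l - r) * k := by
      have : |a| * r / (l - r) ≤ (k : ℝ) := le_trans hN hNk
      have hlr : 0 < l - r := by linarith
      calc |a| * r = (|a| * r / (l - r)) * (l - r) := by field_simp
        _ ≤ (k : ℝ) * (l - r) := by
            apply mul_le_mul_of_nonneg_right this hlr.le
        _ = (l - r) * k := by ring
    nlinarith [abs_nonneg a, hr0.le, Nat.cast_nonneg (α := ℝ) k]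
  have hb : (0 : ℝ) ≤ |bc a k| * r ^ (k - 1) := by positivity
  have hnorm : ∀ m : ℕ, ‖(m : ℝ) * |bc a m| * r ^ (m - 1)‖ = (m : ℝ) * |bc a m| * r ^ (m - 1) := by
    intro m
    rw [Real.norm_eq_abs]
    exact abs_of_nonneg (by positivity)
  rw [hnorm, hnorm]
  have hc : ((k + 1 : ℕ) : ℝ) = (k : ℝ) + 1 := by push_cast; ring
  rw [hc, habs, hpow]
  calc |a - k| * |bc a k| * (r * r ^ (k - 1)) = (|a - k| * r) * (|bc a k| * r ^ (k - 1)) := by ring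
    _ ≤ (l * k) * (|bc a k| * r ^ (k - 1)) := mul_le_mul_of_nonneg_right hkey hb
    _ = l * ((k : ℝ) * |bc a k| * r ^ (k - 1)) := by ring

lemma hasSum_binomial (a : ℝ) {y : ℝ} (hy : |y| < 1) :
    HasSum (fun k : ℕ => bc a k * y ^ k) ((1 + y) ^ a) := by
  set r : ℝ := (1 + |y|) / 2 with hrdef
  have hyr : |y| < r := by rw [hrdef]; linarith
  have hr0 : 0 < r := by rw [hrdef]; positivity
  have hr1 : r < 1 := by rw [hrdef]; linarith
  set s : Set ℝ := Set.Ioo (-r) r with hsdef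
  have hys : y ∈ s := by
    constructor <;> [nlinarith [neg_abs_le y]; nlinarith [le_abs_self y]]
  have h0s : (0 : ℝ) ∈ s := by
    simp only [hsdef, Set.mem_Ioo]
    constructor <;> linarith
  set u : ℕ → ℝ := fun k => (k : ℝ) * |bc a k| * r ^ (k - 1) with hudef
  have hu : Summable u := summable_bc_deriv a hr0 hr1
  set g : ℕ → ℝ → ℝ := fun k z => bc a k * z ^ k with hgdef
  set g' : ℕ → ℝ → ℝ := fun k z => (k : ℝ) * bc a k * z ^ (k - 1) with hg'def
  have hg : ∀ k z, z ∈ s → HasDerivAt (g k) (g' k z) z := by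
    intro k z _
    simpa [hgdef, hg'def, mul_comm, mul_assoc, mul_left_comm] using
      (hasDerivAt_pow k z).const_mul (bc a k)
  have hzr : ∀ z ∈ s, |z| ≤ r := by
    rintro z ⟨h1, h2⟩
    rw [abs_le]; constructor <;> linarith
  have hg' : ∀ k z, z ∈ s → ‖g' k z‖ ≤ u k := by
    intro k z hz
    simp only [hg'def, hudef, Real.norm_eq_abs, abs_mul, Nat.abs_cast, abs_pow]
    gcongr
    exact hzr z hz
  have hg0 : Summable fun k => g k 0 := by
    apply summable_of_ne_finset_zero (s := {0})
    intro k hk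
    simp only [Finset.mem_singleton] at hk
    simp [hgdef, zero_pow hk]
  have hso : IsOpen s := isOpen_Ioo
  have hsc : IsPreconnected s := isPreconnected_Ioo
  set F : ℝ → ℝ := fun z => ∑' k, g k z with hFdef
  set D : ℝ → ℝ := fun z => ∑' k, g' k z with hDdef
  have hF : ∀ z ∈ s, HasDerivAt F (D z) z := fun z hz =>
    hasDerivAt_tsum_of_isPreconnected hu hso hsc hg hg' h0s hg0 hz
  have hFs : ∀ z ∈ s, Summable fun k => g k z := fun z hz =>
    summable_of_summable_hasDerivAt_of_isPreconnected hu hso hsc hg hg' h0s hg0 hz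
  -- the ODE : (1+z) * D z = a * F z on s
  have hode : ∀ z ∈ s, (1 + z) * D z = a * F z := by
    intro z hz
    have S1 : Summable fun k => g' k z := hu.of_norm_bounded (fun k => hg' k z hz)
    have S1' : Summable fun k => g' (k + 1) z := by
      rw [← summable_nat_add_iff 1] at S1; exact S1
    have S2 : Summable fun k : ℕ => (k : ℝ) * bc a k * z ^ k := by
      apply Summable.of_norm_bounded (hu.mul_left r)
      intro k
      rcases k with _ | m
      · simp [hudef]
      · simp only [Real.norm_eq_abs, abs_mul, Nat.abs_cast, abs_pow, hudef]
        have : |z| ^ (m + 1) ≤ r * r ^ (m + 1 - 1) := by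
          rw [Nat.add_sub_cancel, ← pow_succ']
          exact pow_le_pow_left₀ (abs_nonneg z) (hzr z hz) (m + 1)
        calc ((m+1 : ℕ) : ℝ) * |bc a (m+1)| * |z| ^ (m+1)
            ≤ ((m+1 : ℕ) : ℝ) * |bc a (m+1)| * (r * r ^ (m + 1 - 1)) := by
              gcongr
          _ = r * (((m+1 : ℕ) : ℝ) * |bc a (m+1)| * r ^ (m + 1 - 1)) := by ring
    -- z * D z = ∑' k, k * bc a k * z ^ k
    have hzD : z * D z = ∑' k : ℕ, (k : ℝ) * bc a k * z ^ k := by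
      simp only [hDdef]
      rw [← tsum_mul_left]
      apply tsum_congr
      intro k
      rcases k with _ | m
      · simp [hg'def]
      · simp only [hg'def, Nat.add_sub_cancel]
        push_cast
        ring
    -- D z = ∑' k, (a - k) * bc a k * z ^ k
    have hDshift : D z = ∑' k : ℕ, (a - k) * bc a k * z ^ k := by
      simp only [hDdef]
      rw [S1.tsum_eq_zero_add]
      simp only [hg'def, Nat.cast_zero, zero_mul, zero_add]
      apply tsum_congr
      intro k
      simp only [Nat.add_sub_cancel]
      push_cast
      rw [bc_succ a k]
    have hsum2 : Summable fun k : ℕ => (a - k) * bc a k * z ^ k := by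
      have : (fun k : ℕ => (a - (k:ℝ)) * bc a k * z ^ k) = fun k : ℕ => g' (k + 1) z := by
        funext k
        simp only [hg'def, Nat.add_sub_cancel]
        push_cast
        rw [bc_succ a k]
      rw [this]; exact S1'
    rw [add_mul, one_mul, hzD, hDshift, ← hsum2.tsum_add S2]
    simp only [hFdef]
    rw [← tsum_mul_left]
    apply tsum_congr
    intro k
    simp only [hgdef]
    ring
  -- G := F * (1+z)^(-a) is constant on s
  set G : ℝ → ℝ := fun z => F z * (1 + z) ^ (-a) with hGdef
  have h1z : ∀ z ∈ s, (0:ℝ) < 1 + z := by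
    rintro z ⟨h1, _⟩
    nlinarith
  have hGderiv : ∀ z ∈ s, HasDerivAt G 0 z := by
    intro z hz
    have hz1 : (0:ℝ) < 1 + z := h1z z hz
    have hpow : HasDerivAt (fun w : ℝ => (1 + w) ^ (-a)) (1 * (-a) * (1 + z) ^ (-a - 1)) z := by
      have hid : HasDerivAt (fun w : ℝ => 1 + w) 1 z := by
        simpa using (hasDerivAt_id z).const_add 1
      exact hid.rpow_const (Or.inl (ne_of_gt hz1))
    have := (hF z hz).mul hpow
    refine this.congr_deriv ?_
    have hsplit : (1 + z) ^ (-a) = (1 + z) * (1 + z) ^ (-a - 1) := by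
      have h3 := Real.rpow_add hz1 1 (-a - 1)
      rw [Real.rpow_one, show (1:ℝ) + (-a - 1) = -a by ring] at h3
      exact h3
    rw [hsplit]
    have h2 : D z * ((1 + z) * (1 + z) ^ (-a - 1)) + F z * (1 * -a * (1 + z) ^ (-a - 1)) =
        ((1 + z) * D z - a * F z) * (1 + z) ^ (-a - 1) := by ring
    rw [h2, hode z hz, sub_self, zero_mul]
  have hGconst : G y = G 0 := by
    have := Convex.norm_image_sub_le_of_norm_hasDerivWithin_le
      (f := G) (f' := fun _ => (0:ℝ)) (s := s) (C := 0)
      (fun z hz => (hGderiv z hz).hasDerivWithinAt)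
      (fun z _ => by simp) (convex_Ioo _ _) h0s hys
    simp only [norm_le_zero_iff, zero_mul, sub_eq_zero] at this
    exact this
  have hF0 : F 0 = 1 := by
    simp only [hFdef]
    rw [tsum_eq_single 0 (by intro k hk; simp [hgdef, zero_pow hk])]
    simp [hgdef, bc]
  have hGy : F y * (1 + y) ^ (-a) = 1 := by
    have h0 : G 0 = 1 := by
      show F 0 * (1 + 0 : ℝ) ^ (-a) = 1
      rw [hF0, one_mul]
      norm_num
    calc F y * (1 + y) ^ (-a) = G y := rfl
      _ = G 0 := hGconst
      _ = 1 := h0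
  have h1y : (0:ℝ) < 1 + y := h1z y hys
  have hFy : F y = (1 + y) ^ a := by
    have hne : (1 + y) ^ (-a) ≠ 0 := (Real.rpow_pos_of_pos h1y _).ne'
    have h2 : (1 + y) ^ (-a) * (1 + y) ^ a = 1 := by
      rw [← Real.rpow_add h1y]; simp
    calc F y = F y * ((1 + y) ^ (-a) * (1 + y) ^ a) := by rw [h2, mul_one]
      _ = (F y * (1 + y) ^ (-a)) * (1 + y) ^ a := by ring
      _ = (1 + y) ^ a := by rw [hGy, one_mul]
  have hs2 := (hFs y hys).hasSum
  rw [show (∑' k, g k y) = F y from rfl, hFy] at hs2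
  exact hs2

lemma hasSum_degExp (lam : ℝ) (hlam : lam ≠ 0) {u : ℝ} (hu : |lam * u| < 1) :
    HasSum (fun k : ℕ => degFall lam k / (Nat.factorial k : ℝ) * u ^ k)
      ((1 + lam * u) ^ (1 / lam)) := by
  have h := hasSum_binomial (1 / lam) hu
  convert h using 2 with k
  simp only [bc, mul_pow]
  have hprod : degFall lam k = (∏ j ∈ Finset.range k, (1 / lam - (j : ℝ))) * lam ^ k := by
    have hl : lam ^ k = ∏ _j ∈ Finset.range k, lam := by
      rw [Finset.prod_const, Finset.card_range]
    rw [hl, ← Finset.prod_mul_distrib]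
    apply Finset.prod_congr rfl
    intro j _
    field_simp
  rw [hprod]
  ring

noncomputable def wfn : ℕ → ℕ → ℝ
  | 0, m => if m = 0 then 1 else 0
  | (k+1), m => ((m + k).choose k : ℝ)

lemma wfn_nonneg (k m : ℕ) : 0 ≤ wfn k m := by
  cases k with
  | zero => by_cases h : m = 0 <;> simp [wfn, h]
  | succ k => simp [wfn]

lemma row_hasSum (c : ℝ) (k : ℕ) {s : ℝ} (hs : |s| < 1) :
    HasSum (fun m : ℕ => c * wfn k m * s ^ (k + m)) (c * (s / (1 - s)) ^ k) := by
  have hs1 : (1 : ℝ) - s ≠ 0 := by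
    intro h
    have : s = 1 := by linarith
    rw [this] at hs
    norm_num at hs
  cases k with
  | zero =>
    have hfun : (fun m : ℕ => c * wfn 0 m * s ^ (0 + m)) =
        fun m => if m = 0 then c else 0 := by
      funext m
      cases m with
      | zero => simp [wfn]
      | succ m => simp [wfn]
    rw [hfun, show c * (s / (1 - s)) ^ 0 = c by simp]
    exact hasSum_ite_eq 0 c
  | succ k =>
    have h := hasSum_choose_mul_geometric_of_norm_lt_one (𝕜 := ℝ) k
      (r := s) (by rwa [Real.norm_eq_abs])
    have h2 := h.mul_left (c * s ^ (k + 1))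
    have hfun : (fun m : ℕ => c * wfn (k+1) m * s ^ (k + 1 + m)) =
        fun m => (c * s ^ (k+1)) * (((m + k).choose k : ℝ) * s ^ m) := by
      funext m
      show c * ((m + k).choose k : ℝ) * s ^ (k + 1 + m) = _
      rw [pow_add]
      ring
    have hsum : c * (s / (1 - s)) ^ (k+1) = (c * s ^ (k+1)) * (1 / (1 - s) ^ (k+1)) := by
      rw [div_pow]
      field_simp
    rw [hfun, hsum]
    exact h2


lemma hasSum_g (lam x t : ℝ) (hlam : lam ≠ 0)
    (ht : |t| < 1) (hxt : |lam * x * t| < 1 - |t|) :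
    HasSum (fun p : ℕ × ℕ =>
        ((-x) ^ p.1 * degFall lam p.1 / (Nat.factorial p.1 : ℝ)) * wfn p.1 p.2 * t ^ (p.1 + p.2))
      ((1 - lam * x * t / (1 - t)) ^ (1 / lam)) := by
  have ht1 : 0 < 1 - |t| := by linarith
  have htt : t ≤ |t| := le_abs_self t
  have h1t : 0 < 1 - t := by linarith
  set T : ℝ := (1 - lam * x * t / (1 - t)) ^ (1 / lam) with hT
  set cc : ℕ → ℝ := fun k => (-x) ^ k * degFall lam k / (Nat.factorial k : ℝ) with hcc
  have hu1 : |lam * (-(x * t) / (1 - t))| < 1 := by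
    have h : lam * (-(x * t) / (1 - t)) = -(lam * x * t) / (1 - t) := by ring
    rw [h, abs_div, abs_neg, abs_of_pos h1t, div_lt_one h1t]
    linarith
  have HS1 : HasSum (fun k : ℕ => cc k * (t / (1 - t)) ^ k) T := by
    have h := hasSum_degExp lam hlam (u := -(x * t) / (1 - t)) hu1
    have hfun : (fun k : ℕ => degFall lam k / (Nat.factorial k : ℝ) *
        (-(x * t) / (1 - t)) ^ k) = fun k => cc k * (t / (1 - t)) ^ k := by
      funext k
      have h2 : (-(x * t) / (1 - t)) = (-x) * (t / (1 - t)) := by ring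
      rw [h2, mul_pow, hcc]
      ring
    have hval : 1 + lam * (-(x * t) / (1 - t)) = 1 - lam * x * t / (1 - t) := by ring
    rw [hfun, hval] at h
    exact h
  have habs_lam : (-|lam|) ≠ 0 := neg_ne_zero.mpr (abs_ne_zero.mpr hlam)
  have hu2 : |(-|lam|) * (|x| * |t| / (1 - |t|))| < 1 := by
    have h : (-|lam|) * (|x| * |t| / (1 - |t|)) = -((|lam| * |x| * |t|) / (1 - |t|)) := by ring
    rw [h, abs_neg, abs_div, abs_of_pos ht1, abs_of_nonneg (by positivity), div_lt_one ht1]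
    calc |lam| * |x| * |t| = |lam * x * t| := by rw [abs_mul, abs_mul]
      _ < 1 - |t| := hxt
  have hB := (hasSum_degExp (-|lam|) habs_lam hu2).summable
  have hdeg : ∀ k, |degFall lam k| ≤ degFall (-|lam|) k := by
    intro k
    rw [degFall, degFall, Finset.abs_prod]
    apply Finset.prod_le_prod (fun j _ => abs_nonneg _)
    intro j _
    have h1 : |1 - (j:ℝ) * lam| ≤ |(1:ℝ)| + |(j:ℝ) * lam| := abs_sub 1 ((j:ℝ) * lam)
    have h2 : |(j:ℝ) * lam| = (j:ℝ) * |lam| := by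
      rw [abs_mul, Nat.abs_cast]
    rw [h2, abs_one] at h1
    have : 1 - (j:ℝ) * (-|lam|) = 1 + (j:ℝ) * |lam| := by ring
    rw [this]
    exact h1
  have hcc_abs : ∀ k, |cc k| * (|t| / (1 - |t|)) ^ k ≤
      degFall (-|lam|) k / (Nat.factorial k : ℝ) * (|x| * |t| / (1 - |t|)) ^ k := by
    intro k
    have hfk : (0:ℝ) < (Nat.factorial k : ℝ) := by positivity
    have h1 : |cc k| = |x| ^ k * |degFall lam k| / (Nat.factorial k : ℝ) := by
      rw [hcc]
      rw [abs_div, abs_mul, abs_pow, abs_neg, abs_of_pos hfk]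
    rw [h1]
    have h2 : (|x| * |t| / (1 - |t|)) ^ k = |x| ^ k * (|t| / (1 - |t|)) ^ k := by
      rw [← mul_pow]
      congr 1
      ring
    rw [h2]
    have h3 : (0:ℝ) ≤ (|t| / (1 - |t|)) ^ k := by positivity
    have h4 : (0:ℝ) ≤ |x| ^ k := by positivity
    calc |x| ^ k * |degFall lam k| / (Nat.factorial k : ℝ) * (|t| / (1 - |t|)) ^ k
        ≤ |x| ^ k * degFall (-|lam|) k / (Nat.factorial k : ℝ) * (|t| / (1 - |t|)) ^ k := by
          gcongr
          exact hdeg k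
      _ = degFall (-|lam|) k / (Nat.factorial k : ℝ) * (|x| ^ k * (|t| / (1 - |t|)) ^ k) := by
          ring
  set g : ℕ × ℕ → ℝ := fun p => cc p.1 * wfn p.1 p.2 * t ^ (p.1 + p.2) with hgdef
  have hrow : ∀ k, HasSum (fun m => g (k, m)) (cc k * (t / (1 - t)) ^ k) := fun k =>
    row_hasSum (cc k) k ht
  have habs_row : ∀ k, HasSum (fun m => |g (k, m)|) (|cc k| * (|t| / (1 - |t|)) ^ k) := by
    intro k
    have h := row_hasSum |cc k| k (s := |t|) (by rwa [abs_abs])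
    have hfun : (fun m : ℕ => |cc k| * wfn k m * |t| ^ (k + m)) = fun m => |g (k, m)| := by
      funext m
      rw [hgdef]
      simp only
      rw [abs_mul, abs_mul, abs_of_nonneg (wfn_nonneg k m), abs_pow]
    rw [hfun] at h
    exact h
  have hgabs : Summable fun p : ℕ × ℕ => |g p| := by
    rw [summable_prod_of_nonneg (fun p => abs_nonneg _)]
    refine ⟨fun k => (habs_row k).summable, ?_⟩
    apply Summable.of_nonneg_of_le (fun k => ?_) (fun k => ?_) hB
    · exact tsum_nonneg fun m => abs_nonneg _
    · rw [(habs_row k).tsum_eq]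
      exact hcc_abs k
  have hgsum : Summable g := summable_abs_iff.mp hgabs
  have hG : HasSum g T := by
    have h1 := hgsum.hasSum
    have h2 := h1.prod_fiberwise hrow
    rwa [← HS1.unique h2] at h1
  exact hG

lemma coeffEq (lam x t : ℝ) (n : ℕ) :
    ((1 / (Nat.factorial n : ℝ)) *
        ∑ k ∈ Finset.range (n + 1), (-x) ^ k * degFall lam k * lah n k) * t ^ n =
      ∑ p ∈ Finset.HasAntidiagonal.antidiagonal n,
        ((-x) ^ p.1 * degFall lam p.1 / (Nat.factorial p.1 : ℝ)) * wfn p.1 p.2 *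
          t ^ (p.1 + p.2) := by
  rw [Finset.Nat.sum_antidiagonal_eq_sum_range_succ_mk, Finset.mul_sum, Finset.sum_mul]
  apply Finset.sum_congr rfl
  intro k hk
  rw [Finset.mem_range] at hk
  have hkn : k ≤ n := by omega
  have hadd : k + (n - k) = n := by omega
  have hkey : lah n k / (Nat.factorial n : ℝ) = wfn k (n - k) / (Nat.factorial k : ℝ) := by
    cases k with
    | zero =>
      by_cases hn : n = 0 <;> simp [lah, wfn, hn]
    | succ k =>
      have hk1 : k + 1 ≤ n := hkn
      have h1 : n - (k + 1) + k = n - 1 := by omega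
      have hfn : (Nat.factorial n : ℝ) ≠ 0 := by positivity
      have hfk : (Nat.factorial (k+1) : ℝ) ≠ 0 := by positivity
      show (if (k+1) = 0 then (if n = 0 then (1:ℝ) else 0)
          else ((n - 1).choose ((k+1) - 1) : ℝ) * (Nat.factorial n : ℝ) /
            (Nat.factorial (k+1) : ℝ)) / (Nat.factorial n : ℝ) =
          ((n - (k+1) + k).choose k : ℝ) / (Nat.factorial (k+1) : ℝ)
      rw [if_neg (Nat.succ_ne_zero k), h1]
      simp only [Nat.add_sub_cancel]
      field_simp
  show (1 / (Nat.factorial n : ℝ)) * ((-x) ^ k * degFall lam k * lah n k) * t ^ n =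
      ((-x) ^ k * degFall lam k / (Nat.factorial k : ℝ)) * wfn k (n - k) * t ^ (k + (n - k))
  rw [hadd]
  have h5 : (1 / (Nat.factorial n : ℝ)) * ((-x) ^ k * degFall lam k * lah n k) =
      (-x) ^ k * degFall lam k * (lah n k / (Nat.factorial n : ℝ)) := by ring
  rw [h5, hkey]
  ring

/-- The coefficient of `tⁿ` in `e_λ(−xt/(1−t)) = (1 − λxt/(1−t))^{1/λ}` is
`(1/n!) ∑_{k=0}^n (−x)^k (1)_{k,λ} L(n,k)`. -/
theorem degExp_generating_lah (lam x t : ℝ) (hlam : lam ≠ 0)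
    (ht : |t| < 1) (hxt : |lam * x * t| < 1 - |t|) :
    HasSum
      (fun n : ℕ =>
        ((1 / (Nat.factorial n : ℝ)) *
            ∑ k ∈ Finset.range (n + 1), (-x) ^ k * degFall lam k * lah n k) * t ^ n)
      ((1 - lam * x * t / (1 - t)) ^ (1 / lam)) := by
  have hG := hasSum_g lam x t hlam ht hxt
  set F : ℕ × ℕ → ℝ := fun p =>
    ((-x) ^ p.1 * degFall lam p.1 / (Nat.factorial p.1 : ℝ)) * wfn p.1 p.2 * t ^ (p.1 + p.2)
    with hF
  have hsig := (Finset.HasAntidiagonal.sigmaAntidiagonalEquivProd.hasSum_iff (f := F)).mpr hG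
  have hfin : ∀ n : ℕ, HasSum
      (fun c : (Finset.HasAntidiagonal.antidiagonal n : Finset (ℕ × ℕ)) => F c)
      (∑ p ∈ Finset.HasAntidiagonal.antidiagonal n, F p) := by
    intro n
    have h := hasSum_fintype (fun c : (Finset.HasAntidiagonal.antidiagonal n : Finset (ℕ × ℕ)) => F (c : ℕ × ℕ))
    rwa [Finset.sum_coe_sort] at h
  have hdiag := hsig.sigma hfin
  have heq : (fun n : ℕ => ((1 / (Nat.factorial n : ℝ)) *
      ∑ k ∈ Finset.range (n + 1), (-x) ^ k * degFall lam k * lah n k) * t ^ n) =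
      fun n => ∑ p ∈ Finset.HasAntidiagonal.antidiagonal n, F p := funext fun n => coeffEq lam x t n
  rw [heq]
  exact hdiag
end

section
/- Let λ ∈ ℝ with λ ≠ 0 and n ∈ ℕ with n ≥ 1. For every x > 0 with x > |λ|, the n-th derivative at x of the function x ↦ (1 + λ/x)^{1/λ} equals (−1)^n · x^{−n} · (1 + λ/x)^{1/λ} · Σ_{l=0}^{n} L(n,l) · (1)_{l,λ} · (1/(x + λ))^{l}. -/
open Finset Real

lemma degFall_succ (lam : ℝ) (l : ℕ) :
    degFall lam (l+1) = degFall lam l * (1 - (l:ℝ) * lam) := Finset.prod_range_succ _ _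

lemma choose_id (m k : ℕ) :
    (m+2) * Nat.choose (m+1) (k+1) = (m+k+3) * Nat.choose m (k+1) + (k+2) * Nat.choose m k := by
  rcases le_or_gt k m with h | h
  · have h1 : Nat.choose m (k+1) * (k+1) = Nat.choose m k * (m - k) := Nat.choose_succ_right_eq m k
    have h2 : Nat.choose (m+1) (k+1) = Nat.choose m k + Nat.choose m (k+1) := Nat.choose_succ_succ m k
    zify [h] at h1 ⊢
    rw [h2]; push_cast; linear_combination -h1
  · have h1 : Nat.choose m (k+1) = 0 := Nat.choose_eq_zero_of_lt (by omega)
    have h2 : Nat.choose m k = 0 := Nat.choose_eq_zero_of_lt h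
    have h3 : Nat.choose (m+1) (k+1) = 0 := Nat.choose_eq_zero_of_lt (by omega)
    simp [h1, h2, h3]

lemma lah_aux (m k : ℕ) :
    (Nat.choose (m+1) (k+1) : ℝ) * Nat.factorial (m+2) / Nat.factorial (k+2) =
      ((m:ℝ)+(k:ℝ)+3) * ((Nat.choose m (k+1) : ℝ) * Nat.factorial (m+1) / Nat.factorial (k+2))
      + (Nat.choose m k : ℝ) * Nat.factorial (m+1) / Nat.factorial (k+1) := by
  have hcast : ((m:ℝ)+2) * Nat.choose (m+1) (k+1) = ((m:ℝ)+(k:ℝ)+3) * Nat.choose m (k+1) + ((k:ℝ)+2) * Nat.choose m k := by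
    exact_mod_cast congrArg (Nat.cast : ℕ → ℝ) (choose_id m k)
  have hfk1 : (Nat.factorial (k+1) : ℝ) ≠ 0 := Nat.cast_ne_zero.2 (Nat.factorial_ne_zero _)
  have hk2 : ((k:ℝ)+2) ≠ 0 := by positivity
  have e1 : (Nat.factorial (m+2) : ℝ) = ((m:ℝ)+2) * Nat.factorial (m+1) := by
    push_cast [Nat.factorial_succ]; ring
  have e2 : (Nat.factorial (k+2) : ℝ) = ((k:ℝ)+2) * Nat.factorial (k+1) := by
    push_cast [Nat.factorial_succ]; ring
  rw [e1, e2]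
  simp only [mul_div_assoc']
  rw [div_add_div _ _ (mul_ne_zero hk2 hfk1) hfk1,
    div_eq_div_iff (mul_ne_zero hk2 hfk1) (mul_ne_zero (mul_ne_zero hk2 hfk1) hfk1)]
  linear_combination ((Nat.factorial (m+1) : ℝ) * (Nat.factorial (k+1):ℝ)^2 * (((k:ℝ)+2))) * hcast

lemma lah_rec (n l : ℕ) (hn : 1 ≤ n) :
    lah (n+1) (l+1) = ((n:ℝ) + (l:ℝ) + 1) * lah n (l+1) + lah n l := by
  obtain ⟨m, rfl⟩ : ∃ m, n = m + 1 := ⟨n - 1, by omega⟩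
  cases l with
  | zero =>
    simp only [lah, Nat.factorial]
    norm_num [Nat.factorial_succ]
  | succ k =>
    have := lah_aux m k
    simp only [lah, Nat.succ_ne_zero, if_false, show m+2-1 = m+1 from rfl,
      show k+2-1 = k+1 from rfl, show m+1-1 = m from rfl, show k+1-1 = k from rfl]
    push_cast
    linear_combination this

lemma lah_zero (n : ℕ) (hn : 1 ≤ n) : lah n 0 = 0 := by
  have : ¬ n = 0 := by omega
  simp [lah, this]

lemma lah_top (n : ℕ) (hn : 1 ≤ n) : lah n (n+1) = 0 := by
  simp [lah, Nat.choose_eq_zero_of_lt (show n - 1 < n by omega)]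

lemma sum_id (lam x u : ℝ) (n : ℕ) (hn : 1 ≤ n) (hu : x * u = 1 - lam * u) :
    ∑ l ∈ range (n+2), lah (n+1) l * degFall lam l * u ^ l
    = (n:ℝ) * (∑ l ∈ range (n+1), lah n l * degFall lam l * u ^ l)
      + u * (∑ l ∈ range (n+1), lah n l * degFall lam l * u ^ l)
      + x * (∑ l ∈ range (n+1), (l:ℝ) * (lah n l * degFall lam l) * u ^ (l+1)) := by
  have key : ∑ l ∈ range (n+1), ((n:ℝ)+(l:ℝ)+1) * (lah n (l+1) * degFall lam (l+1)) * u^(l+1)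
         = ∑ l ∈ range (n+1), ((n:ℝ)+(l:ℝ)) * (lah n l * degFall lam l) * u^l := by
    rw [Finset.sum_range_succ' (fun l => ((n:ℝ)+(l:ℝ)) * (lah n l * degFall lam l) * u^l) n,
      Finset.sum_range_succ (fun l => ((n:ℝ)+(l:ℝ)+1) * (lah n (l+1) * degFall lam (l+1)) * u^(l+1)) n]
    rw [lah_zero n hn, lah_top n hn]
    simp only [zero_mul, mul_zero, add_zero]
    exact Finset.sum_congr rfl fun l _ => by push_cast; ring
  rw [Finset.sum_range_succ' (fun l => lah (n+1) l * degFall lam l * u ^ l) (n+1)]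
  have h0 : lah (n+1) 0 * degFall lam 0 * u^0 = 0 := by
    rw [lah_zero (n+1) (by omega)]; ring
  rw [h0, add_zero]
  have expand : ∑ l ∈ range (n+1), lah (n+1) (l+1) * degFall lam (l+1) * u ^ (l+1)
      = ∑ l ∈ range (n+1), (((n:ℝ)+(l:ℝ)+1) * (lah n (l+1) * degFall lam (l+1)) * u^(l+1)
          + (lah n l * degFall lam l) * (1 - (l:ℝ)*lam) * u ^ (l+1) ) := by
    refine Finset.sum_congr rfl fun l _ => ?_
    rw [lah_rec n l hn, degFall_succ]
    ring
  rw [expand, Finset.sum_add_distrib, key, Finset.mul_sum, Finset.mul_sum, Finset.mul_sum,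
    ← Finset.sum_add_distrib, ← Finset.sum_add_distrib, ← Finset.sum_add_distrib]
  refine Finset.sum_congr rfl fun l _ => ?_
  have hp : u ^ (l+1) = u ^ l * u := pow_succ u l
  rw [hp]
  linear_combination (-((l:ℝ) * (lah n l * degFall lam l) * u ^ l)) * hu

lemma hasDerivAt_base (lam x : ℝ) (hlam : lam ≠ 0) (hx : |lam| < x) :
    HasDerivAt (fun y : ℝ => (1 + lam / y) ^ (1 / lam))
      (-(1 + lam / x) ^ (1 / lam) / (x * (x + lam))) x := by
  have hx0 : 0 < x := lt_of_le_of_lt (abs_nonneg lam) hx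
  have hxl : 0 < x + lam := by have := neg_abs_le lam; linarith
  have h1e : 1 + lam / x = (x + lam) / x := by field_simp
  have h1pos : 0 < 1 + lam / x := by rw [h1e]; positivity
  have hinner : HasDerivAt (fun y : ℝ => 1 + lam / y) (lam * (-(x^2)⁻¹)) x := by
    have : HasDerivAt (fun y : ℝ => 1 + lam * y⁻¹) (lam * (-(x^2)⁻¹)) x :=
      (((hasDerivAt_inv hx0.ne').const_mul lam).const_add 1)
    simpa [div_eq_mul_inv] using this
  have h := hinner.rpow_const (p := 1 / lam) (Or.inl h1pos.ne')
  convert h using 1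
  rw [Real.rpow_sub h1pos, Real.rpow_one]
  field_simp

lemma hasDerivAt_g (lam : ℝ) (hlam : lam ≠ 0) (n : ℕ) (hn : 1 ≤ n) (x : ℝ) (hx : |lam| < x) :
    HasDerivAt (fun y : ℝ => (-1:ℝ)^n * (y^n)⁻¹ * (1 + lam / y) ^ (1/lam) *
        ∑ l ∈ range (n+1), lah n l * degFall lam l * ((y+lam)⁻¹) ^ l)
      ((-1:ℝ)^(n+1) * (x^(n+1))⁻¹ * (1 + lam / x) ^ (1/lam) *
        ∑ l ∈ range (n+2), lah (n+1) l * degFall lam l * ((x+lam)⁻¹) ^ l) x := by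
  have hx0 : 0 < x := lt_of_le_of_lt (abs_nonneg lam) hx
  have hxl : 0 < x + lam := by have := neg_abs_le lam; linarith
  have hu : x * (x+lam)⁻¹ = 1 - lam * (x+lam)⁻¹ := by field_simp; ring
  have h1 : HasDerivAt (fun y : ℝ => (y^n)⁻¹) (-((n:ℝ) * x^(n-1)) / (x^n)^2) x :=
    (hasDerivAt_pow n x).inv (pow_ne_zero n hx0.ne')
  have hf := hasDerivAt_base lam x hlam hx
  have hSl : ∀ l ∈ range (n+1), HasDerivAt (fun y : ℝ => lah n l * degFall lam l * ((y+lam)⁻¹) ^ l)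
      (lah n l * degFall lam l * ((l:ℝ) * ((x+lam)⁻¹)^(l-1) * (-(1:ℝ)/(x+lam)^2))) x := by
    intro l _
    have hinv : HasDerivAt (fun y : ℝ => (y+lam)⁻¹) (-(1:ℝ)/(x+lam)^2) x :=
      ((hasDerivAt_id x).add_const lam).inv hxl.ne'
    exact (hinv.pow l).const_mul _
  have hS : HasDerivAt (fun y : ℝ => ∑ l ∈ range (n+1), lah n l * degFall lam l * ((y+lam)⁻¹) ^ l)
      (∑ l ∈ range (n+1), lah n l * degFall lam l * ((l:ℝ) * ((x+lam)⁻¹)^(l-1) * (-(1:ℝ)/(x+lam)^2))) x :=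
    HasDerivAt.fun_sum hSl
  have hS' : (∑ l ∈ range (n+1), lah n l * degFall lam l * ((l:ℝ) * ((x+lam)⁻¹)^(l-1) * (-(1:ℝ)/(x+lam)^2)))
      = -∑ l ∈ range (n+1), (l:ℝ) * (lah n l * degFall lam l) * ((x+lam)⁻¹) ^ (l+1) := by
    rw [← Finset.sum_neg_distrib]
    refine Finset.sum_congr rfl fun l _ => ?_
    cases l with
    | zero => simp
    | succ k =>
      have h2 : (-(1:ℝ)/(x+lam)^2) = -(((x+lam)⁻¹)^2) := by field_simp
      rw [h2]
      push_cast
      ring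
  have hC := ((h1.const_mul ((-1:ℝ)^n)).mul hf).mul hS
  refine HasDerivAt.congr_deriv hC ?_
  symm
  simp only [Pi.mul_apply]
  rw [hS', sum_id lam x ((x+lam)⁻¹) n hn hu]
  obtain ⟨m, rfl⟩ : ∃ m, n = m + 1 := ⟨n - 1, by omega⟩
  simp only [Nat.add_sub_cancel]
  generalize (1 + lam / x) ^ (1 / lam) = A
  generalize (∑ l ∈ range (m+1+1), lah (m+1) l * degFall lam l * ((x+lam)⁻¹) ^ l) = S
  generalize (∑ l ∈ range (m+1+1), (l:ℝ) * (lah (m+1) l * degFall lam l) * ((x+lam)⁻¹) ^ (l+1)) = T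
  push_cast
  field_simp
  ring

/-- Theorem 5: for `n ≥ 1`,
`dⁿ/dxⁿ e_λ(1/x) = (−1)ⁿ x^{−n} e_λ(1/x) ∑_{l=0}^n L(n,l) (1)_{l,λ} (1/(x+λ))^l`,
where `e_λ(1/x) = (1 + λ/x)^{1/λ}`. -/
theorem iteratedDeriv_degExp_inv (lam : ℝ) (hlam : lam ≠ 0) (n : ℕ) (hn : 1 ≤ n) :
    ∀ x : ℝ, 0 < x → |lam| < x →
      iteratedDeriv n (fun y : ℝ => (1 + lam / y) ^ (1 / lam)) x =
        (-1 : ℝ) ^ n * x ^ (-(n : ℝ)) * (1 + lam / x) ^ (1 / lam) *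
          ∑ l ∈ Finset.range (n + 1), lah n l * degFall lam l * (1 / (x + lam)) ^ l := by
  induction n, hn using Nat.le_induction with
  | base =>
    intro x hx0 hx
    have hxl : 0 < x + lam := by have := neg_abs_le lam; linarith
    rw [iteratedDeriv_one, (hasDerivAt_base lam x hlam hx).deriv]
    rw [Finset.sum_range_succ, Finset.sum_range_succ, Finset.sum_range_zero]
    have hl0 : lah 1 0 = 0 := lah_zero 1 le_rfl
    have hl1 : lah 1 1 = 1 := by norm_num [lah, Nat.factorial]
    have hd1 : degFall lam 1 = 1 := by norm_num [degFall]
    rw [hl0, hl1, hd1]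
    rw [show -(((1:ℕ)):ℝ) = -1 by norm_num, Real.rpow_neg_one]
    field_simp
    ring
  | succ n hn ih =>
    intro x hx0 hx
    have hxl : 0 < x + lam := by have := neg_abs_le lam; linarith
    have hev : iteratedDeriv n (fun y : ℝ => (1 + lam / y) ^ (1 / lam)) =ᶠ[nhds x]
        (fun y : ℝ => (-1:ℝ)^n * (y^n)⁻¹ * (1 + lam / y) ^ (1/lam) *
          ∑ l ∈ range (n+1), lah n l * degFall lam l * ((y+lam)⁻¹) ^ l) := by
      filter_upwards [isOpen_Ioi.mem_nhds (show x ∈ Set.Ioi |lam| from hx)] with y hy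
      have hy0 : 0 < y := lt_of_le_of_lt (abs_nonneg lam) hy
      rw [ih y hy0 hy, Real.rpow_neg hy0.le, Real.rpow_natCast]
      simp only [one_div]
    rw [iteratedDeriv_succ, hev.deriv_eq, (hasDerivAt_g lam hlam n hn x hx).deriv,
      Real.rpow_neg hx0.le, Real.rpow_natCast]
    simp only [one_div]
end

section
/- Let λ ∈ ℝ with λ ≠ 0, let α > 0 satisfy |λ|·α < 1, and let n ∈ ℕ. Then the series Σ_{k=0}^∞ (k)_n·(1)_{k,λ}·α^k/k! converges with sum α^n·(1)_{n,λ}·(1+λα)^{(1/λ) − n}, where (k)_n := k·(k−1)⋯(k−n+1) is the ordinary falling factorial. Equivalently, the degenerate Poisson random variable X_λ with parameter α, having probability mass function p(i) = e_λ(α)^{−1}·α^i·(1)_{i,λ}/i!, has falling factorial moment E[(X_λ)_n] = α^n·(1)_{n,λ}·(1/(1+αλ))^n. -/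
open Finset Filter Set

private noncomputable def bcoef (r : ℝ) (m : ℕ) : ℝ :=
  (∏ j ∈ Finset.range m, (r - (j : ℝ))) / (Nat.factorial m : ℝ)

private lemma bcoef_succ (r : ℝ) (m : ℕ) :
    bcoef r (m + 1) = bcoef r m * ((r - m) / (m + 1)) := by
  have h1 : (Nat.factorial m : ℝ) ≠ 0 := Nat.cast_ne_zero.mpr (Nat.factorial_ne_zero m)
  have h2 : ((m : ℝ) + 1) ≠ 0 := by positivity
  simp only [bcoef, Finset.prod_range_succ, Nat.factorial_succ]
  push_cast
  rw [div_mul_div_comm]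
  ring

private lemma summable_deriv_bound (r ρ : ℝ) (hρ0 : 0 < ρ) (hρ1 : ρ < 1) :
    Summable (fun m : ℕ => (m : ℝ) * |bcoef r m| * ρ ^ (m - 1)) := by
  set c : ℝ := (ρ + 1) / 2 with hc
  have hρc : ρ < c := by rw [hc]; linarith
  have hc1 : c < 1 := by rw [hc]; linarith
  have hc0 : 0 < c := by rw [hc]; linarith
  apply summable_of_ratio_norm_eventually_le hc1
  have hE : ∀ᶠ m : ℕ in atTop, (|r| * ρ) / (c - ρ) ≤ (m : ℝ) :=
    tendsto_natCast_atTop_atTop.eventually_ge_atTop _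
  filter_upwards [eventually_ge_atTop 1, hE] with m hm hEm
  obtain ⟨k, rfl⟩ : ∃ k, m = k + 1 := ⟨m - 1, (Nat.succ_pred_eq_of_pos hm).symm⟩
  have hb := bcoef_succ r (k + 1)
  push_cast at hb
  have hk1 : (0 : ℝ) < (k : ℝ) + 1 := by positivity
  have hk2 : (0 : ℝ) < (k : ℝ) + 1 + 1 := by positivity
  -- key numeric inequality : |r - (k+1)| * ρ ≤ c * (k+1)
  have habs : |r - ((k : ℝ) + 1)| ≤ |r| + ((k : ℝ) + 1) := by
    calc |r - ((k : ℝ) + 1)| ≤ |r| + |((k : ℝ) + 1)| := abs_sub _ _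
    _ = |r| + ((k : ℝ) + 1) := by rw [abs_of_pos hk1]
  have hkey : |r - ((k : ℝ) + 1)| * ρ ≤ c * ((k : ℝ) + 1) := by
    have h1 : (|r| * ρ) / (c - ρ) ≤ (k : ℝ) + 1 := by
      push_cast at hEm; linarith
    have h2 : |r| * ρ ≤ (c - ρ) * ((k : ℝ) + 1) := by
      rw [div_le_iff₀ (by linarith : (0:ℝ) < c - ρ)] at h1; linarith
    nlinarith [abs_nonneg (r - ((k:ℝ)+1))]
  have hnorm : ∀ m : ℕ, ‖(m : ℝ) * |bcoef r m| * ρ ^ (m - 1)‖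
      = (m : ℝ) * |bcoef r m| * ρ ^ (m - 1) := by
    intro m
    rw [Real.norm_eq_abs, abs_of_nonneg]
    positivity
  rw [hnorm, hnorm]
  have hs1 : (k + 1 + 1 : ℕ) - 1 = k + 1 := rfl
  have hs2 : (k + 1 : ℕ) - 1 = k := rfl
  rw [hs1, hs2, hb]
  push_cast
  rw [abs_mul, abs_div]
  rw [abs_of_pos hk2]
  have hρk : (0:ℝ) ≤ ρ ^ k := by positivity
  have hbk : (0:ℝ) ≤ |bcoef r (k+1)| := abs_nonneg _
  calc ((k:ℝ) + 1 + 1) * (|bcoef r (k + 1)| * (|r - ((k:ℝ) + 1)| / ((k:ℝ) + 1 + 1))) * ρ ^ (k + 1)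
      = |bcoef r (k + 1)| * (|r - ((k:ℝ) + 1)| * ρ) * ρ ^ k := by
        field_simp; ring
    _ ≤ |bcoef r (k + 1)| * (c * ((k:ℝ) + 1)) * ρ ^ k := by
        apply mul_le_mul_of_nonneg_right _ hρk
        exact mul_le_mul_of_nonneg_left hkey hbk
    _ = c * (((k:ℝ) + 1) * |bcoef r (k + 1)| * ρ ^ k) := by ring

private lemma binomial_hasSum (r x : ℝ) (hx : |x| < 1) :
    HasSum (fun m : ℕ => bcoef r m * x ^ m) ((1 + x) ^ r) := by
  set ρ : ℝ := (|x| + 1) / 2 with hρdef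
  have hρ0 : 0 < ρ := by positivity
  have hρ1 : ρ < 1 := by rw [hρdef]; linarith
  have hxρ : |x| < ρ := by rw [hρdef]; linarith
  set t : Set ℝ := Set.Ioo (-ρ) ρ with htdef
  have ht : IsOpen t := isOpen_Ioo
  have h't : IsPreconnected t := (convex_Ioo _ _).isPreconnected
  have hxt : x ∈ t := by constructor <;> [linarith [neg_abs_le x]; linarith [le_abs_self x]]
  have h0t : (0 : ℝ) ∈ t := by constructor <;> simp [hρ0]
  set u : ℕ → ℝ := fun m => (m : ℝ) * |bcoef r m| * ρ ^ (m - 1) with hudef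
  have hu : Summable u := summable_deriv_bound r ρ hρ0 hρ1
  set g : ℕ → ℝ → ℝ := fun m z => bcoef r m * z ^ m with hgdef
  set g' : ℕ → ℝ → ℝ := fun m z => (m : ℝ) * bcoef r m * z ^ (m - 1) with hg'def
  have hg : ∀ m (y : ℝ), HasDerivAt (g m) (g' m y) y := by
    intro m y
    have := (hasDerivAt_pow m y).const_mul (bcoef r m)
    have heq : g' m y = bcoef r m * ((m : ℕ) * y ^ (m - 1)) := by
      simp only [hg'def]; ring
    rw [heq]
    exact this
  have hg' : ∀ m (y : ℝ), y ∈ t → ‖g' m y‖ ≤ u m := by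
    intro m y hy
    have hyρ : |y| ≤ ρ := by
      rcases hy with ⟨h1, h2⟩
      rw [abs_le]; constructor <;> linarith
    simp only [hg'def, hudef, Real.norm_eq_abs, abs_mul, abs_pow, Nat.abs_cast]
    gcongr
  have hg0 : Summable (fun m => g m 0) := by
    apply summable_of_ne_finset_zero (s := {0})
    intro m hm
    simp only [Finset.mem_singleton] at hm
    simp [hgdef, zero_pow hm]
  have hsum : ∀ y ∈ t, Summable (fun m => g m y) := fun y hy =>
    summable_of_summable_hasDerivAt_of_isPreconnected hu ht h't
      (fun n z _ => hg n z) hg' h0t hg0 hy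
  set G : ℝ → ℝ := fun y => ∑' m, g m y with hGdef
  have hGderiv : ∀ y ∈ t, HasDerivAt G (∑' m, g' m y) y := fun y hy =>
    hasDerivAt_tsum_of_isPreconnected hu ht h't
      (fun n z _ => hg n z) hg' h0t hg0 hy
  -- functional equation : (1 + y) * D y = r * G y
  have key : ∀ y ∈ t, (1 + y) * (∑' m, g' m y) = r * G y := by
    intro y hy
    have hd : Summable (fun m => g' m y) :=
      Summable.of_norm_bounded hu (fun m => hg' m y hy)
    have hSd : HasSum (fun m => g' m y) (∑' m, g' m y) := hd.hasSum
    have hSg : HasSum (fun m => g m y) (G y) := (hsum y hy).hasSum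
    -- shift the derivative series
    have hSd1 : HasSum (fun m : ℕ => ((m : ℝ) + 1) * bcoef r (m + 1) * y ^ m)
        (∑' m, g' m y) := by
      have h0 : g' 0 y = 0 := by simp [hg'def]
      have : HasSum (fun m : ℕ => g' (m + 1) y) (∑' m, g' m y) :=
        (hasSum_nat_add_iff (f := fun m => g' m y) 1).mpr (by simpa [h0] using hSd)
      convert this using 2 with m
      simp only [hg'def, Nat.add_sub_cancel, Nat.cast_add, Nat.cast_one]
    have hS2' : HasSum (fun m : ℕ => ((m : ℝ) + 1) * bcoef r (m + 1) * y ^ m * y)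
        ((∑' m, g' m y) * y) := hSd1.mul_right y
    have hS2 : HasSum (fun m : ℕ => (m : ℝ) * bcoef r m * y ^ m)
        ((∑' m, g' m y) * y) := by
      have := (hasSum_nat_add_iff (f := fun m : ℕ => (m : ℝ) * bcoef r m * y ^ m) 1).mp (by
          show HasSum (fun m : ℕ => (((m + 1 : ℕ) : ℝ)) * bcoef r (m + 1) * y ^ (m + 1)) ((∑' m, g' m y) * y)
          convert hS2' using 2 with m
          push_cast
          ring)
      simpa using this
    have hS3 : HasSum (fun m : ℕ => r * (bcoef r m * y ^ m))
        ((∑' m, g' m y) + (∑' m, g' m y) * y) := by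
      have := hSd1.add hS2
      convert this using 2 with m
      have hb := bcoef_succ r m
      have hm1 : ((m : ℝ) + 1) ≠ 0 := by positivity
      rw [hb]
      field_simp
      ring
    have hS4 : HasSum (fun m : ℕ => r * (bcoef r m * y ^ m)) (r * G y) :=
      hSg.mul_left r
    have := hS3.unique hS4
    linarith [this]
  -- H y = G y * (1+y)^(-r) has zero derivative on t
  set H : ℝ → ℝ := fun y => G y * (1 + y) ^ (-r) with hHdef
  have hH : ∀ y ∈ t, HasDerivAt H 0 y := by
    intro y hy
    have h1y : (0 : ℝ) < 1 + y := by
      rcases hy with ⟨h1, _⟩; nlinarith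
    have hrpow : HasDerivAt (fun z : ℝ => (1 + z) ^ (-r))
        ((-r) * (1 + y) ^ (-r - 1)) y := by
      have h := (Real.hasDerivAt_rpow_const (x := 1 + y) (p := -r) (Or.inl h1y.ne'))
      have hcomp := h.comp y ((hasDerivAt_id y).const_add 1)
      simpa [Function.comp_def] using hcomp
    have hmul : HasDerivAt (G * fun z : ℝ => (1 + z) ^ (-r))
        ((∑' m, g' m y) * (1 + y) ^ (-r) + G y * (-r * (1 + y) ^ (-r - 1))) y :=
      (hGderiv y hy).mul hrpow
    convert hmul using 1
    · rfl
    have hpow : (1 + y : ℝ) ^ (-r) = (1 + y) ^ (-r - 1) * (1 + y) := by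
      rw [← Real.rpow_add_one h1y.ne' (-r - 1)]
      congr 1
      ring
    rw [hpow]
    have hk := key y hy
    linear_combination (-(1 + y) ^ (-r - 1)) * hk
  -- H is constant on segments inside t, so H x = H 0
  have hsub : ∀ a b : ℝ, a ∈ t → b ∈ t → Icc a b ⊆ t := by
    intro a b ha hb z hz
    exact ⟨lt_of_lt_of_le ha.1 hz.1, lt_of_le_of_lt hz.2 hb.2⟩
  have hHconst : H x = H 0 := by
    rcases le_total 0 x with h | h
    · have hI : Icc (0:ℝ) x ⊆ t := hsub 0 x h0t hxt
      have := constant_of_has_deriv_right_zero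
        (f := H) (a := 0) (b := x)
        (fun z hz => (hH z (hI hz)).continuousAt.continuousWithinAt)
        (fun z hz => ((hH z (hI (Ico_subset_Icc_self hz))).hasDerivWithinAt))
        x (Set.right_mem_Icc.mpr h)
      exact this
    · have hI : Icc x (0:ℝ) ⊆ t := hsub x 0 hxt h0t
      have := constant_of_has_deriv_right_zero
        (f := H) (a := x) (b := 0)
        (fun z hz => (hH z (hI hz)).continuousAt.continuousWithinAt)
        (fun z hz => ((hH z (hI (Ico_subset_Icc_self hz))).hasDerivWithinAt))
        0 (Set.right_mem_Icc.mpr h)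
      exact this.symm
  have hG0 : G 0 = 1 := by
    have : G 0 = g 0 0 := tsum_eq_single 0 (fun m hm => by simp [hgdef, zero_pow hm])
    rw [this]
    simp [hgdef, bcoef]
  have hH0 : H 0 = 1 := by
    simp [hHdef, hG0]
  have h1x : (0 : ℝ) < 1 + x := by nlinarith [neg_abs_le x, abs_nonneg x]
  have hGx : G x = (1 + x) ^ r := by
    have h1 : G x * (1 + x) ^ (-r) = 1 := by
      have h := hHconst.trans hH0
      simpa [hHdef] using h
    have h2 : (1 + x) ^ (-r) = ((1 + x) ^ r)⁻¹ := Real.rpow_neg h1x.le r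
    have h3 : (0:ℝ) < (1 + x) ^ r := Real.rpow_pos_of_pos h1x r
    rw [h2] at h1
    field_simp at h1
    linarith
  have hfin : HasSum (fun m : ℕ => bcoef r m * x ^ m) (G x) := (hsum x hxt).hasSum
  rwa [hGx] at hfin

private lemma prod_range_sub_fact (m : ℕ) : ∀ n : ℕ,
    (∏ j ∈ Finset.range n, (((m + n : ℕ) : ℝ) - (j : ℝ))) * (Nat.factorial m : ℝ)
      = ((m + n).factorial : ℝ) := by
  intro n
  induction n with
  | zero => simp
  | succ n ih =>
    rw [Finset.prod_range_succ']
    have h1 : ∀ j ∈ Finset.range n,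
        (((m + (n+1) : ℕ) : ℝ) - ((j + 1 : ℕ) : ℝ)) = (((m + n : ℕ) : ℝ) - (j : ℝ)) := by
      intro j _; push_cast; ring
    rw [Finset.prod_congr rfl h1]
    have h2 : (((m + (n+1) : ℕ) : ℝ) - ((0 : ℕ) : ℝ)) = ((m + n : ℕ) : ℝ) + 1 := by
      push_cast; ring
    rw [h2]
    have h3 : ((m + (n+1)).factorial : ℝ) = (((m+n:ℕ):ℝ) + 1) * ((m + n).factorial : ℝ) := by
      have : m + (n + 1) = (m + n) + 1 := by ring
      rw [this, Nat.factorial_succ]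
      push_cast; ring
    rw [h3, ← ih]
    ring

/-- Falling factorial moment of the degenerate Poisson random variable with parameter `α`:
`∑_{k=0}^∞ (k)ₙ (1)_{k,λ} α^k / k! = αⁿ (1)_{n,λ} (1+λα)^{1/λ − n}`,
i.e. `E[(X_λ)ₙ] = αⁿ (1)_{n,λ} (1/(1+αλ))ⁿ` after dividing by `e_λ(α) = (1+λα)^{1/λ}`. -/
theorem degPoisson_falling_factorial_moment (lam α : ℝ) (hlam : lam ≠ 0)
    (hα : 0 < α) (hineq : |lam| * α < 1) (n : ℕ) :
    HasSum
      (fun k : ℕ =>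
        (∏ j ∈ Finset.range n, ((k : ℝ) - (j : ℝ))) * degFall lam k * α ^ k /
          (Nat.factorial k : ℝ))
      (α ^ n * degFall lam n * (1 + lam * α) ^ (1 / lam - (n : ℝ))) := by
  set x : ℝ := lam * α with hxdef
  set r : ℝ := 1 / lam - (n : ℝ) with hrdef
  set f : ℕ → ℝ := fun k =>
    (∏ j ∈ Finset.range n, ((k : ℝ) - (j : ℝ))) * degFall lam k * α ^ k /
      (Nat.factorial k : ℝ) with hfdef
  have hx : |x| < 1 := by
    rw [hxdef, abs_mul, abs_of_pos hα]
    exact hineq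
  have hbin := binomial_hasSum r x hx
  set C : ℝ := α ^ n * degFall lam n with hCdef
  have hC : HasSum (fun m : ℕ => C * (bcoef r m * x ^ m)) (C * (1 + x) ^ r) :=
    hbin.mul_left C
  -- shift identity : f (m + n) = C * (bcoef r m * x ^ m)
  have hshift : ∀ m : ℕ, f (m + n) = C * (bcoef r m * x ^ m) := by
    intro m
    have hfm : (Nat.factorial m : ℝ) ≠ 0 := Nat.cast_ne_zero.mpr (Nat.factorial_ne_zero m)
    have hfmn : (Nat.factorial (m + n) : ℝ) ≠ 0 :=
      Nat.cast_ne_zero.mpr (Nat.factorial_ne_zero (m + n))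
    have hA := prod_range_sub_fact m n
    have hB : degFall lam (m + n)
        = degFall lam n * (lam ^ m * ∏ j ∈ Finset.range m, (r - (j : ℝ))) := by
      rw [degFall, add_comm m n, Finset.prod_range_add]
      congr 1
      have h1 : ∀ j ∈ Finset.range m,
          (1 - ((n + j : ℕ) : ℝ) * lam) = lam * (r - (j : ℝ)) := by
        intro j _
        rw [hrdef]
        push_cast
        field_simp
        ring
      rw [Finset.prod_congr rfl h1, Finset.prod_mul_distrib, Finset.prod_const, Finset.card_range]
    have hprod : (∏ j ∈ Finset.range n, (((m + n : ℕ) : ℝ) - (j : ℝ)))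
        = ((m + n).factorial : ℝ) / (Nat.factorial m : ℝ) := by
      rw [eq_div_iff hfm]; exact hA
    simp only [hfdef, hB, bcoef]
    rw [hprod]
    rw [hxdef, hCdef]
    push_cast
    field_simp
    ring
  have hzero : ∀ i < n, f i = 0 := by
    intro i hi
    have : (∏ j ∈ Finset.range n, ((i : ℝ) - (j : ℝ))) = 0 := by
      apply Finset.prod_eq_zero (Finset.mem_range.mpr hi)
      simp
    simp [hfdef, this]
  have hsum0 : ∑ i ∈ Finset.range n, f i = 0 :=
    Finset.sum_eq_zero (fun i hi => hzero i (Finset.mem_range.mp hi))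
  have hmain := (hasSum_nat_add_iff (f := f) n).mp
    (show HasSum (fun m : ℕ => f (m + n)) (C * (1 + x) ^ r) by
      simpa [hshift] using hC)
  rw [hsum0, add_zero] at hmain
  exact hmain
end
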